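/- arXiv:2107.09696 — 4 statements merged into one kernel-verified Lean document; each statement's English description precedes it below -/
import Mathlib

section
/- Let 𝒮 be a 1-nested compatible set pair system on X. Suppose P and P' form a reticulation cycle in D(𝒮), i.e., P and P' are distinct directed paths in D(𝒮) (sequences of elements of 𝒮 in which each element covers the next in (𝒮,≤), each containing at least two elements) with the same first element and the same last element, and no elements in common other than their first and last elements. Then there exist (S,H), (S',H) ∈ 𝒮 with H ≠ ∅ and S ∩ S' = ∅ such that {P,P'} = {P(S,H), P(S',H)}; in particular, the common last element of P and P' is (H,∅), so H is uniquely determined by the reticulation cycle. Moreover, for every (S'',H'') ∈ 𝒮 with H'' ≠ ∅ and H'' ≠ H, the directed path P(S'',H'') has no arc in common with P or with P' (an arc being a pair of consecutive elements of the path). -/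
open Set

variable {X : Type*}

/-- A set pair on `X`: an ordered pair `(S,H)` of subsets of `X` with `S ≠ ∅` and `S ∩ H = ∅`. -/
def IsSetPair (p : Set X × Set X) : Prop :=
  p.1 ≠ ∅ ∧ p.1 ∩ p.2 = ∅

/-- A set pair system on `X`: a collection of set pairs on `X`. -/
def IsSPS (𝒮 : Set (Set X × Set X)) : Prop :=
  ∀ p ∈ 𝒮, IsSetPair p

/-- The strict relation `<` on set pairs: `(S₁,H₁) < (S₂,H₂)` iff they are distinct and
(a) `S₁ ∪ H₁ ⊆ S₂`, or (b) `S₁ ∪ H₁ ⊆ H₂`, or (c) `S₁ ⊊ S₂` and `H₁ = H₂ ≠ ∅`. -/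
def splt (p q : Set X × Set X) : Prop :=
  p ≠ q ∧ (p.1 ∪ p.2 ⊆ q.1 ∨ p.1 ∪ p.2 ⊆ q.2 ∨ (p.1 ⊂ q.1 ∧ p.2 = q.2 ∧ q.2 ≠ ∅))

/-- `(S₁,H₁) ≤ (S₂,H₂)` iff `(S₁,H₁) < (S₂,H₂)` or `(S₁,H₁) = (S₂,H₂)`. -/
def sple (p q : Set X × Set X) : Prop :=
  splt p q ∨ p = q

/-- Exactly one of four propositions holds. -/
def ExactlyOne4 (a b c d : Prop) : Prop :=
  (a ∧ ¬b ∧ ¬c ∧ ¬d) ∨ (¬a ∧ b ∧ ¬c ∧ ¬d) ∨ (¬a ∧ ¬b ∧ c ∧ ¬d) ∨ (¬a ∧ ¬b ∧ ¬c ∧ d)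

/-- Exactly one of three propositions holds. -/
def ExactlyOne3 (a b c : Prop) : Prop :=
  (a ∧ ¬b ∧ ¬c) ∨ (¬a ∧ b ∧ ¬c) ∨ (¬a ∧ ¬b ∧ c)

/-- A 1-nested compatible set pair system on `X`: a set pair system satisfying (NC1)–(NC5). -/
def OneNestedCompatible (𝒮 : Set (Set X × Set X)) : Prop :=
  IsSPS 𝒮 ∧
  -- (NC1)
  (((Set.univ : Set X), (∅ : Set X)) ∈ 𝒮) ∧
  -- (NC2)
  (∀ x : X, (({x} : Set X), (∅ : Set X)) ∈ 𝒮) ∧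
  -- (NC3)
  (∀ p ∈ 𝒮, p.2 ≠ ∅ → ((p.2, (∅ : Set X)) : Set X × Set X) ∈ 𝒮) ∧
  -- (NC4)
  (∀ p ∈ 𝒮, ∀ q ∈ 𝒮, p ≠ q →
    ExactlyOne4 (splt p q) (splt q p)
      ((p.1 ∪ p.2) ∩ (q.1 ∪ q.2) = ∅)
      (p.1 ∩ q.1 = ∅ ∧ p.2 = q.2 ∧ p.2 ≠ ∅)) ∧
  -- (NC5)
  (¬ ∃ p ∈ 𝒮, ∃ q ∈ 𝒮, ∃ r ∈ 𝒮,
    p.2 = q.2 ∧ q.2 = r.2 ∧ p.2 ≠ ∅ ∧ p.1 ∩ q.1 = ∅ ∧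
    (p.1 ∪ q.1 ⊆ r.1 ∨ (p.1 ∪ q.1) ∩ r.1 = ∅))

/-- `p` covers `q` in the partial order `(𝒮,≤)`: an arc from `p` to `q`
in the Hasse diagram `D(𝒮)`; `p` is a parent of `q`, and `q` is a child of `p`. -/
def SPCovers (𝒮 : Set (Set X × Set X)) (p q : Set X × Set X) : Prop :=
  p ∈ 𝒮 ∧ q ∈ 𝒮 ∧ splt q p ∧ ¬ ∃ r ∈ 𝒮, splt q r ∧ splt r p

/-- `L` is the directed path `P(S,H)` in `D(𝒮)` associated with `(S,H) ∈ 𝒮`, `H ≠ ∅`: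
a sequence `(q₀,…,q_m)` of elements of `𝒮` with `m ≥ 2` in which `q_j` covers `q_{j+1}`,
such that `q_m = (H,∅)`, every interior `q_j` (`1 ≤ j ≤ m-1`) has second component `H`,
`q_i = (S,H)` for some `1 ≤ i ≤ m-1`, and the first element `q₀ = (S₊,H₊)` satisfies
`S ∪ H ⊆ S₊` and `H₊ ≠ H`. -/
def IsSPPath (𝒮 : Set (Set X × Set X)) (S H : Set X) (L : List (Set X × Set X)) : Prop :=
  3 ≤ L.length ∧
  List.Chain' (fun a b => SPCovers 𝒮 a b) L ∧
  L.getLast? = some ((H, (∅ : Set X)) : Set X × Set X) ∧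
  (∀ i : ℕ, ∀ p : Set X × Set X, 1 ≤ i → i + 1 < L.length → L[i]? = some p → p.2 = H) ∧
  (∃ i : ℕ, 1 ≤ i ∧ i + 1 < L.length ∧ L[i]? = some ((S, H) : Set X × Set X)) ∧
  (∃ p : Set X × Set X, L.head? = some p ∧ S ∪ H ⊆ p.1 ∧ p.2 ≠ H)

/-- A directed path in the Hasse diagram `D(𝒮)`: a sequence of at least two elements of `𝒮`
in which each element covers the next. -/
def IsDirPath (𝒮 : Set (Set X × Set X)) (L : List (Set X × Set X)) : Prop :=
  2 ≤ L.length ∧ List.Chain' (fun a b => SPCovers 𝒮 a b) L ∧ ∀ p ∈ L, p ∈ 𝒮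

section Basic
open scoped Classical
variable {X : Type*} [Fintype X]

noncomputable def msr (p : Set X × Set X) : ℕ :=
  2 * (p.1 ∪ p.2).ncard + (if p.2 = ∅ then 1 else 0)

lemma msr_lt {p q : Set X × Set X} (hq : IsSetPair q) (h : splt p q) : msr p < msr q := by
  obtain ⟨hne, hc⟩ := h
  have hfin : (q.1 ∪ q.2).Finite := Set.toFinite _
  have hif : (if p.2 = (∅ : Set X) then 1 else 0) ≤ 1 := by split <;> omega
  rcases hc with h1 | h1 | ⟨hss, h2, _⟩
  · by_cases heq : p.1 ∪ p.2 = q.1 ∪ q.2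
    · have hq2 : q.2 = (∅ : Set X) := by
        have : q.2 ⊆ q.1 := by
          intro x hx
          exact h1 (heq ▸ (Set.mem_union_right _ hx))
        have : q.2 ⊆ q.1 ∩ q.2 := fun x hx => ⟨this hx, hx⟩
        rw [hq.2] at this
        exact Set.eq_empty_iff_forall_notMem.2 fun x hx => this hx
      have hp2 : p.2 ≠ (∅ : Set X) := by
        intro hp2
        apply hne
        have hp1 : p.1 = q.1 := by
          have : p.1 ∪ p.2 = q.1 := by rw [heq, hq2, Set.union_empty]
          rw [hp2, Set.union_empty] at this; exact this
        exact Prod.ext hp1 (hp2.trans hq2.symm)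
      simp only [msr, heq, hp2, hq2, if_true, if_false]
      omega
    · have hlt : (p.1 ∪ p.2).ncard < (q.1 ∪ q.2).ncard :=
        Set.ncard_lt_ncard ⟨h1.trans Set.subset_union_left, fun hsub => heq (Set.Subset.antisymm (h1.trans Set.subset_union_left) hsub)⟩ hfin
      simp only [msr]; omega
  · have hlt : (p.1 ∪ p.2).ncard < (q.1 ∪ q.2).ncard := by
      apply Set.ncard_lt_ncard _ hfin
      constructor
      · exact h1.trans Set.subset_union_right
      · intro hsub
        obtain ⟨x, hx⟩ := Set.nonempty_iff_ne_empty.2 hq.1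
        have hx2 : x ∈ q.2 := h1 (hsub (Set.mem_union_left _ hx))
        have : x ∈ q.1 ∩ q.2 := ⟨hx, hx2⟩
        rw [hq.2] at this; exact this
    simp only [msr]; omega
  · have hlt : (p.1 ∪ p.2).ncard < (q.1 ∪ q.2).ncard := by
      apply Set.ncard_lt_ncard _ hfin
      constructor
      · exact Set.union_subset_union hss.1 (h2 ▸ Set.Subset.rfl)
      · intro hsub
        obtain ⟨x, hx1, hx2⟩ := Set.exists_of_ssubset hss
        rcases hsub (Set.mem_union_left _ hx1) with hx | hx
        · exact hx2 hx
        · rw [h2] at hx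
          have : x ∈ q.1 ∩ q.2 := ⟨hx1, hx⟩
          rw [hq.2] at this; exact this
    simp only [msr, h2] at hlt ⊢; omega

lemma splt_trans {p q r : Set X × Set X} (hp : IsSetPair p) (hq : IsSetPair q)
    (hr : IsSetPair r) (h1 : splt p q) (h2 : splt q r) : splt p r := by
  have hne : p ≠ r := by
    intro he
    subst he
    have h3 := msr_lt hq h1
    have h4 := msr_lt hr h2
    omega
  refine ⟨hne, ?_⟩
  rcases h1.2 with a1 | b1 | ⟨c1, c1', _⟩ <;> rcases h2.2 with a2 | b2 | ⟨c2, c2', hc2⟩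
  · exact Or.inl (a1.trans (Set.subset_union_left.trans a2))
  · exact Or.inr (Or.inl (a1.trans (Set.subset_union_left.trans b2)))
  · exact Or.inl (a1.trans c2.subset)
  · exact Or.inl (b1.trans (Set.subset_union_right.trans a2))
  · exact Or.inr (Or.inl (b1.trans (Set.subset_union_right.trans b2)))
  · exact Or.inr (Or.inl (c2' ▸ b1))
  · exact Or.inl ((Set.union_subset_union c1.subset (c1' ▸ Set.Subset.rfl)).trans a2)
  · exact Or.inr (Or.inl ((Set.union_subset_union c1.subset (c1' ▸ Set.Subset.rfl)).trans b2))
  · exact Or.inr (Or.inr ⟨c1.trans c2, c1'.trans c2', hc2⟩)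

end Basic
section Sys
open scoped Classical
variable {X : Type*} [Fintype X] {𝒮 : Set (Set X × Set X)}
set_option linter.unusedSectionVars false

lemma disj_elim {A B : Set X} (h : A ∩ B = ∅) {x : X} (h1 : x ∈ A) (h2 : x ∈ B) : False := by
  rw [Set.eq_empty_iff_forall_notMem] at h; exact h x ⟨h1, h2⟩

lemma ne_empty_iff {A : Set X} : A ≠ ∅ ↔ ∃ x, x ∈ A := by
  rw [← Set.nonempty_iff_ne_empty]; rfl

lemma splt_asymm {p q : Set X × Set X} (hp : IsSetPair p) (hq : IsSetPair q)
    (h : splt p q) : ¬ splt q p := fun h' => by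
  have := msr_lt hq h; have := msr_lt hp h'; omega

lemma splt_irrefl {p : Set X × Set X} (hp : IsSetPair p) : ¬ splt p p := fun h => by
  have := msr_lt hp h; omega

lemma splt_fst_subset {p r : Set X × Set X} (h : splt p r) : p.1 ⊆ r.1 ∪ r.2 := by
  rcases h.2 with h1 | h1 | ⟨h1, _, _⟩
  · exact (Set.subset_union_left.trans h1).trans Set.subset_union_left
  · exact (Set.subset_union_left.trans h1).trans Set.subset_union_right
  · exact h1.subset.trans Set.subset_union_left

lemma exOne4_or {a b c d : Prop} (h : ExactlyOne4 a b c d) : a ∨ b ∨ c ∨ d := by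
  rcases h with ⟨h,-,-,-⟩|⟨-,h,-,-⟩|⟨-,-,h,-⟩|⟨-,-,-,h⟩ <;> tauto

lemma chain_cover {L : List (Set X × Set X)}
    (hC : List.Chain' (fun a b => SPCovers 𝒮 a b) L) {i : ℕ} (hi : i + 1 < L.length) :
    SPCovers 𝒮 (L[i]'(by omega)) (L[i+1]'hi) := by
  have := List.isChain_iff_getElem.1 hC i (by omega)
  simpa [List.get_eq_getElem] using this

lemma chain_splt (hS : IsSPS 𝒮) {L : List (Set X × Set X)}
    (hC : List.Chain' (fun a b => SPCovers 𝒮 a b) L) :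
    ∀ {j : ℕ} (i : ℕ) (hij : i < j) (hj : j < L.length),
      splt (L[j]'hj) (L[i]'(by omega)) := by
  intro j
  induction j with
  | zero => intro i h _; omega
  | succ j ih =>
    intro i hij hj
    have hcov := chain_cover hC (i := j) hj
    rcases Nat.lt_succ_iff_lt_or_eq.1 hij with hlt | heq
    · have hmem : L[i]'(by omega) ∈ 𝒮 := (chain_cover hC (i := i) (by omega)).1
      exact splt_trans (hS _ hcov.2.1) (hS _ hcov.1) (hS _ hmem)
        hcov.2.2.1 (ih i hlt (by omega))
    · subst heq; exact hcov.2.2.1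

lemma exists_cover_le (hS : IsSPS 𝒮) {p q : Set X × Set X} (hp : p ∈ 𝒮) (hq : q ∈ 𝒮)
    (hpq : splt p q) : ∃ r, SPCovers 𝒮 r p ∧ (r = q ∨ splt r q) := by
  set T : Set (Set X × Set X) := {r | r ∈ 𝒮 ∧ splt p r ∧ (r = q ∨ splt r q)} with hT
  have hTfin : T.Finite := Set.toFinite _
  have hqT : q ∈ hTfin.toFinset := by
    rw [Set.Finite.mem_toFinset]; exact ⟨hq, hpq, Or.inl rfl⟩
  obtain ⟨r, hrT, hmin⟩ := hTfin.toFinset.exists_min_image msr ⟨q, hqT⟩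
  rw [Set.Finite.mem_toFinset] at hrT
  obtain ⟨hr𝒮, hpr, hrq⟩ := hrT
  refine ⟨r, ⟨hr𝒮, hp, hpr, ?_⟩, hrq⟩
  rintro ⟨s, hs𝒮, hps, hsr⟩
  have hsq : s = q ∨ splt s q := by
    rcases hrq with rfl | hrq
    · exact Or.inr hsr
    · exact Or.inr (splt_trans (hS _ hs𝒮) (hS _ hr𝒮) (hS _ hq) hsr hrq)
  have hsT : s ∈ hTfin.toFinset := by
    rw [Set.Finite.mem_toFinset]; exact ⟨hs𝒮, hps, hsq⟩
  have h1 := hmin s hsT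
  have h2 : msr s < msr r := msr_lt (hS _ hr𝒮) hsr
  omega

lemma cover_not_sub2 (h : OneNestedCompatible 𝒮) {w v : Set X × Set X}
    (hcov : SPCovers 𝒮 w v) (hv2 : v.2 ≠ ∅) : ¬ (v.1 ∪ v.2 ⊆ w.2) := by
  obtain ⟨hS, _, _, hNC3, _, _⟩ := h
  intro hsub
  obtain ⟨hw𝒮, hv𝒮, hvw, hnomid⟩ := hcov
  have hv1 : v.1 ≠ ∅ := (hS _ hv𝒮).1
  have hw2 : w.2 ≠ ∅ := by
    rw [ne_empty_iff] at hv1 ⊢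
    obtain ⟨x, hx⟩ := hv1
    exact ⟨x, hsub (Set.mem_union_left _ hx)⟩
  have hmid𝒮 : ((w.2, (∅ : Set X)) : Set X × Set X) ∈ 𝒮 := hNC3 w hw𝒮 hw2
  apply hnomid
  refine ⟨(w.2, ∅), hmid𝒮, ⟨?_, Or.inl hsub⟩, ⟨?_, Or.inr (Or.inl ?_)⟩⟩
  · intro he; exact hv2 (by rw [he])
  · intro he; exact hw2 (by rw [← he])
  · simp

lemma covers_covers (h : OneNestedCompatible 𝒮) {r c p : Set X × Set X}
    (hr : SPCovers 𝒮 r p) (hc : SPCovers 𝒮 c p) (hne : r ≠ c) :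
    r.2 = c.2 ∧ r.2 ≠ ∅ ∧ r.1 ∩ c.1 = ∅ ∧ p = (r.2, ∅) := by
  obtain ⟨hS, _, _, hNC3, hNC4, _⟩ := h
  obtain ⟨hr𝒮, hp𝒮, hpr, hrnomid⟩ := hr
  obtain ⟨hc𝒮, _, hpc, hcnomid⟩ := hc
  have hp1 : p.1 ≠ ∅ := (hS _ hp𝒮).1
  obtain ⟨x, hx⟩ := ne_empty_iff.1 hp1
  rcases exOne4_or (hNC4 r hr𝒮 c hc𝒮 hne) with hrc | hcr | hdisj | ⟨h1, h2, h3⟩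
  · exact absurd ⟨r, hr𝒮, hpr, hrc⟩ hcnomid
  · exact absurd ⟨c, hc𝒮, hpc, hcr⟩ hrnomid
  · exact absurd (splt_fst_subset hpc hx) (fun hh => disj_elim hdisj (splt_fst_subset hpr hx) hh)
  · -- r.1 ∩ c.1 = ∅, r.2 = c.2 ≠ ∅
    refine ⟨h2, h3, h1, ?_⟩
    -- first: p.1 ∪ p.2 ⊆ r.2
    have hsub : p.1 ∪ p.2 ⊆ r.2 := by
      rcases hpr.2 with ha | hb | ⟨hc1, hc2, _⟩
      · -- p.1 ∪ p.2 ⊆ r.1 : contradiction with splt p c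
        exfalso
        have hp1r : p.1 ⊆ r.1 := Set.subset_union_left.trans ha
        rcases hpc.2 with ha' | hb' | ⟨hc1', _, _⟩
        · exact disj_elim h1 (hp1r hx) (Set.subset_union_left.trans ha' hx)
        · -- p.1 ∪ p.2 ⊆ c.2 = r.2 ; r.1 ∩ r.2 = ∅
          exact disj_elim (hS _ hr𝒮).2 (hp1r hx)
            (h2 ▸ (Set.subset_union_left.trans hb' hx))
        · exact disj_elim h1 (hp1r hx) (hc1'.subset hx)
      · exact hb
      · -- p.1 ⊂ r.1, p.2 = r.2
        exfalso
        rcases hpc.2 with ha' | hb' | ⟨hc1', _, _⟩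
        · exact disj_elim h1 (hc1.subset hx) (Set.subset_union_left.trans ha' hx)
        · -- p.1 ⊆ c.2 = r.2 = p.2, but p.1 ∩ p.2 = ∅ and p.1 ≠ ∅
          have : x ∈ p.2 := hc2 ▸ (h2 ▸ (Set.subset_union_left.trans hb' hx))
          exact disj_elim (hS _ hp𝒮).2 hx this
        · exact disj_elim h1 (hc1.subset hx) (hc1'.subset hx)
    -- now p = (r.2, ∅)
    by_contra hpe
    have hmid𝒮 : ((r.2, (∅ : Set X)) : Set X × Set X) ∈ 𝒮 := hNC3 r hr𝒮 h3
    apply hrnomid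
    refine ⟨(r.2, ∅), hmid𝒮, ⟨hpe, Or.inl hsub⟩, ⟨?_, Or.inr (Or.inl ?_)⟩⟩
    · intro he; exact h3 (by rw [← he])
    · simp

lemma cover_unique (h : OneNestedCompatible 𝒮) {r c p : Set X × Set X}
    (hr : SPCovers 𝒮 r p) (hc : SPCovers 𝒮 c p) (hp2 : p.2 ≠ ∅) : r = c := by
  by_contra hne
  obtain ⟨_, _, _, hpe⟩ := covers_covers h hr hc hne
  exact hp2 (by rw [hpe])

end Sys
section Climb
open scoped Classical
variable {X : Type*} [Fintype X] {𝒮 : Set (Set X × Set X)}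
set_option linter.unusedSectionVars false
set_option linter.unusedVariables false

lemma splt_pen (h : OneNestedCompatible 𝒮) {q x A : Set X × Set X} {H : Set X}
    (hcov : SPCovers 𝒮 q x) (hA : A ∈ 𝒮) (hx2 : x.2 = H) (hq2 : q.2 ≠ H)
    (hA2 : A.2 = H) (hH : H ≠ ∅) : splt A q := by
  have hS := h.1
  obtain ⟨hq𝒮, hx𝒮, hxq, hnomid⟩ := hcov
  obtain ⟨y, hy⟩ := ne_empty_iff.1 hH
  have hHsub : H ⊆ q.1 := by
    rcases hxq.2 with ha | hb | ⟨_, hc, _⟩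
    · exact fun z hz => ha (Set.mem_union_right _ (hx2 ▸ hz))
    · exact absurd hb (cover_not_sub2 h ⟨hq𝒮, hx𝒮, hxq, hnomid⟩ (by rw [hx2]; exact hH))
    · exact absurd (hc ▸ hx2) hq2
  have hAq : A ≠ q := fun he => hq2 (he ▸ hA2)
  rcases exOne4_or (h.2.2.2.2.1 A hA q hq𝒮 hAq) with hsp | hsp | hdisj | ⟨_, he, _⟩
  · exact hsp
  · exfalso
    rcases hsp.2 with ha | hb | ⟨_, hc, _⟩
    · exact disj_elim (hS _ hA).2 (ha (Set.mem_union_left _ (hHsub hy))) (hA2 ▸ hy)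
    · obtain ⟨z, hz⟩ := ne_empty_iff.1 (hS _ hx𝒮).1
      have hz2 : z ∈ x.2 := by
        rw [hx2, ← hA2]
        exact hb (splt_fst_subset hxq hz)
      exact disj_elim (hS _ hx𝒮).2 hz hz2
    · exact hq2 (hc.trans hA2)
  · exact absurd trivial fun _ => disj_elim hdisj (Set.mem_union_right A.1 (show y ∈ A.2 from hA2.symm ▸ hy))
      (Set.mem_union_left _ (hHsub hy))
  · exact absurd (he ▸ hA2) hq2

lemma no_bad (h : OneNestedCompatible 𝒮) {L M : List (Set X × Set X)}
    (hL : IsDirPath 𝒮 L) (hM : IsDirPath 𝒮 M)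
    (hL3 : 3 ≤ L.length) (hM3 : 3 ≤ M.length)
    (hhead : L[0]'(by omega) = M[0]'(by omega))
    (hcom : ∀ p : Set X × Set X, p ∈ L → p ∈ M →
      p = L[0]'(by omega) ∨ p = L[L.length-1]'(by omega))
    {H : Set X} (hH : H ≠ ∅)
    (hAL : (L[L.length-2]'(by omega)).2 = H)
    (hAM : (M[M.length-2]'(by omega)).2 = H)
    {j : ℕ} (hj1 : 1 ≤ j) (hj2 : j ≤ L.length - 2)
    (hbad : (L[j]'(by omega)).2 ≠ H)
    (hminL : ∀ i (hi1 : 1 ≤ i) (hi2 : i ≤ L.length - 2), (L[i]'(by omega)).2 ≠ H →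
      ¬ splt (L[i]'(by omega)) (L[j]'(by omega)))
    (hminM : ∀ i (hi1 : 1 ≤ i) (hi2 : i ≤ M.length - 2), (M[i]'(by omega)).2 ≠ H →
      ¬ splt (M[i]'(by omega)) (L[j]'(by omega))) : False := by
  have hS := h.1
  have hq𝒮 : L[j]'(by omega) ∈ 𝒮 := hL.2.2 _ (List.getElem_mem _)
  have hqsp := hS _ hq𝒮
  -- j < L.length - 2
  have hjlt : j < L.length - 2 := by
    rcases lt_or_eq_of_le hj2 with hc | hc
    · exact hc
    · exfalso; subst hc; exact hbad hAL
  -- x = L[j+1] has second component H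
  have hcovqx : SPCovers 𝒮 (L[j]'(by omega)) (L[j+1]'(by omega)) :=
    chain_cover hL.2.1 (by omega)
  have hx2 : (L[j+1]'(by omega)).2 = H := by
    by_contra hc
    exact hminL (j+1) (by omega) (by omega) hc hcovqx.2.2.1
  -- start of the climb
  have hstart : splt (M[M.length-2]'(by omega)) (L[j]'(by omega)) :=
    splt_pen h hcovqx (hM.2.2 _ (List.getElem_mem _)) hx2 hbad hAM hH
  -- q strictly below head and strictly above last of L
  have hqhead : splt (L[j]'(by omega)) (L[0]'(by omega)) :=
    chain_splt hS hL.2.1 0 (by omega) (by omega)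
  have hqlast : splt (L[L.length-1]'(by omega)) (L[j]'(by omega)) :=
    chain_splt hS hL.2.1 j (by omega) (by omega)
  -- the climb
  have climb : ∀ k (hk1 : 1 ≤ k) (hk2 : k ≤ M.length - 2),
      splt (M[k]'(by omega)) (L[j]'(by omega)) → False := by
    intro k
    induction k using Nat.strong_induction_on with
    | _ k ih =>
      intro hk1 hk2 hsp
      have hMk𝒮 : M[k]'(by omega) ∈ 𝒮 := hM.2.2 _ (List.getElem_mem _)
      have hMk2 : (M[k]'(by omega)).2 = H := by
        by_contra hc; exact hminM k hk1 hk2 hc hsp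
      obtain ⟨r, hrcov, hrle⟩ := exists_cover_le hS hMk𝒮 hq𝒮 hsp
      have hMcov : SPCovers 𝒮 (M[k-1]'(by omega)) (M[k]'(by omega)) := by
        have h2 := chain_cover hM.2.1 (i := k-1) (by omega)
        have he : k - 1 + 1 = k := Nat.sub_add_cancel hk1
        simp only [he] at h2
        exact h2
      have hr : r = M[k-1]'(by omega) :=
        cover_unique h hrcov hMcov (by rw [hMk2]; exact hH)
      subst hr
      rcases hrle with heq | hsp'
      · -- M[k-1] = q : common element of L and M
        have hqM : L[j]'(by omega) ∈ M := heq ▸ List.getElem_mem _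
        rcases hcom _ (List.getElem_mem _) hqM with hc | hc
        · rw [← hc] at hqhead
          exact splt_irrefl hqsp hqhead
        · rw [← hc] at hqlast
          exact splt_irrefl hqsp hqlast
      · rcases Nat.eq_or_lt_of_le hk1 with hk | hk
        · -- k = 1, so M[k-1] = M[0] = L[0]
          have h0 : (M[k-1]'(by omega)) = L[0]'(by omega) := by
            rw [hhead]
            congr 1
            omega
          rw [h0] at hsp'
          exact splt_asymm hqsp (hS _ (hL.2.2 _ (List.getElem_mem _))) hqhead hsp'
        · exact ih (k-1) (by omega) (by omega) (by omega) hsp'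
  exact climb (M.length - 2) (by omega) le_rfl hstart

end Climb
section Helpers
open scoped Classical
variable {X : Type*} [Fintype X] {𝒮 : Set (Set X × Set X)}
set_option linter.unusedSectionVars false
set_option linter.unusedVariables false

lemma mem_zip_tail {α : Type*} {L : List α} {a : α × α} (h : a ∈ L.zip L.tail) :
    ∃ k, ∃ (hk : k + 1 < L.length), a.1 = L[k]'(by omega) ∧ a.2 = L[k+1]'hk := by
  rw [List.mem_iff_get] at h
  obtain ⟨⟨n, hn⟩, he⟩ := h
  have hlen : (L.zip L.tail).length ≤ L.tail.length := by
    rw [List.length_zip]; omega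
  have hn' : n < L.tail.length := lt_of_lt_of_le hn hlen
  have hn2 : n + 1 < L.length := by
    rw [List.length_tail] at hn'; omega
  refine ⟨n, hn2, ?_, ?_⟩
  · rw [← he]; simp [List.get_eq_getElem, List.getElem_zip]
  · rw [← he]; simp [List.get_eq_getElem, List.getElem_zip, List.getElem_tail]

lemma path_snd {S H : Set X} {L : List (Set X × Set X)} (hL : IsSPPath 𝒮 S H L)
    {a : (Set X × Set X) × (Set X × Set X)} (h : a ∈ L.zip L.tail) :
    a.2.2 = H ∨ a.2 = ((H, ∅) : Set X × Set X) := by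
  obtain ⟨hlen, _, hlast, hintr, _, _⟩ := hL
  obtain ⟨k, hk, _, h2⟩ := mem_zip_tail h
  by_cases hki : k + 1 + 1 < L.length
  · left
    exact hintr (k+1) a.2 (by omega) hki (by rw [h2, List.getElem?_eq_getElem])
  · right
    have hke : k + 1 = L.length - 1 := by omega
    rw [List.getLast?_eq_getElem?, List.getElem?_eq_getElem (by omega)] at hlast
    have := Option.some.inj hlast
    rw [h2]
    have : L[k+1]'hk = L[L.length-1]'(by omega) := by congr 1
    rw [this]
    exact Option.some.inj hlast

lemma three_le (h : OneNestedCompatible 𝒮) {P P' : List (Set X × Set X)}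
    (hP : IsDirPath 𝒮 P) (hP' : IsDirPath 𝒮 P') (hne : P ≠ P')
    (hhead0 : P[0]'(by have := hP.1; omega) = P'[0]'(by have := hP'.1; omega))
    (hlastE : P[P.length-1]'(by have := hP.1; omega) = P'[P'.length-1]'(by have := hP'.1; omega)) :
    3 ≤ P.length := by
  have hS := h.1
  have h2 : 2 ≤ P.length := hP.1
  have h2' : 2 ≤ P'.length := hP'.1
  by_contra hc
  have hPlen : P.length = 2 := by omega
  rcases Nat.lt_or_ge P'.length 3 with hc' | hc'
  · have hP'len : P'.length = 2 := by omega
    apply hne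
    apply List.ext_getElem (by omega)
    intro i h1 h1'
    match i, h1 with
    | 0, _ => exact hhead0
    | 1, _ =>
      have e1 : P[1]'(by omega) = P[P.length-1]'(by omega) := by congr 1; omega
      have e2 : P'[1]'(by omega) = P'[P'.length-1]'(by omega) := by congr 1; omega
      rw [e1, e2]; exact hlastE
    | (n+2), hn => exact absurd hn (by omega)
  · -- P'.length ≥ 3 : P'[1] lies strictly between
    have hcov : SPCovers 𝒮 (P[0]'(by omega)) (P[1]'(by omega)) := chain_cover hP.2.1 (by omega)
    apply hcov.2.2.2
    refine ⟨P'[1]'(by omega), hP'.2.2 _ (List.getElem_mem _), ?_, ?_⟩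
    · -- splt P[1] P'[1] : P[1] = P[P.length-1] = P'[P'.length-1]
      have he : P[1]'(by omega) = P'[P'.length-1]'(by omega) := by
        rw [← hlastE]; congr 1; omega
      rw [he]
      exact chain_splt hS hP'.2.1 1 (by omega) (by omega)
    · rw [hhead0]
      exact chain_splt hS hP'.2.1 0 (by omega) (by omega)

lemma interior_chain (h : OneNestedCompatible 𝒮) {P : List (Set X × Set X)}
    (hP : IsDirPath 𝒮 P) (h3 : 3 ≤ P.length) {H : Set X} (hH : H ≠ ∅)
    (hint : ∀ i (hi1 : 1 ≤ i) (hi2 : i ≤ P.length - 2), (P[i]'(by omega)).2 = H) :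
    ∀ i (hi1 : 1 ≤ i) (hi2 : i ≤ P.length - 2),
      (P[P.length-2]'(by omega)).1 ⊆ (P[i]'(by omega)).1 := by
  have hS := h.1
  have hstep : ∀ i (hi1 : 1 ≤ i) (hi2 : i + 1 ≤ P.length - 2),
      (P[i+1]'(by omega)).1 ⊆ (P[i]'(by omega)).1 := by
    intro i h1 h2
    have hcov := chain_cover hP.2.1 (i := i) (by omega)
    have hi2 : (P[i]'(by omega)).2 = H := hint i h1 (by omega)
    have hi12 : (P[i+1]'(by omega)).2 = H := hint (i+1) (by omega) h2
    obtain ⟨y, hy⟩ := ne_empty_iff.1 hH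
    rcases hcov.2.2.1.2 with ha | hb | ⟨hc, _, _⟩
    · exfalso
      have hyH : y ∈ (P[i]'(by omega)).1 := ha (Set.mem_union_right _ (hi12.symm ▸ hy))
      exact disj_elim (hS _ hcov.1).2 hyH (hi2.symm ▸ hy)
    · exfalso
      obtain ⟨z, hz⟩ := ne_empty_iff.1 (hS _ hcov.2.1).1
      have hz2 : z ∈ (P[i+1]'(by omega)).2 := by
        rw [hi12, ← hi2]; exact hb (Set.mem_union_left _ hz)
      exact disj_elim (hS _ hcov.2.1).2 hz (by rw [hi12, ← hi12] at hz2; exact hz2)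
    · exact hc.subset
  -- downward induction
  have main : ∀ d i (hi1 : 1 ≤ i) (hd : i + d = P.length - 2),
      (P[P.length-2]'(by omega)).1 ⊆ (P[i]'(by omega)).1 := by
    intro d
    induction d with
    | zero =>
      intro i h1 hd
      have : i = P.length - 2 := by omega
      subst this
      exact Set.Subset.rfl
    | succ d ih =>
      intro i h1 hd
      have hsub1 := ih (i+1) (by omega) (by omega)
      exact hsub1.trans (hstep i h1 (by omega))
  intro i h1 h2
  exact main (P.length - 2 - i) i h1 (by omega)

lemma head_cond (h : OneNestedCompatible 𝒮) {L M : List (Set X × Set X)}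
    (hL : IsDirPath 𝒮 L) (hM : IsDirPath 𝒮 M)
    (hL3 : 3 ≤ L.length) (hM3 : 3 ≤ M.length)
    (hhead0 : L[0]'(by omega) = M[0]'(by omega))
    (hcom : ∀ p : Set X × Set X, p ∈ L → p ∈ M →
      p = L[0]'(by omega) ∨ p = L[L.length-1]'(by omega))
    {H : Set X} (hH : H ≠ ∅)
    (hL1 : (L[1]'(by omega)).2 = H) (hM1 : (M[1]'(by omega)).2 = H) :
    (L[1]'(by omega)).1 ∪ H ⊆ (L[0]'(by omega)).1 ∧ (L[0]'(by omega)).2 ≠ H := by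
  have hS := h.1
  have hNC5 := h.2.2.2.2.2
  obtain ⟨y, hy⟩ := ne_empty_iff.1 hH
  have hcov1 : SPCovers 𝒮 (L[0]'(by omega)) (L[1]'(by omega)) := chain_cover hL.2.1 (by omega)
  have hcov1' : SPCovers 𝒮 (L[0]'(by omega)) (M[1]'(by omega)) := by
    rw [hhead0]; exact chain_cover hM.2.1 (by omega)
  have hq1ne : (L[1]'(by omega)) ≠ (M[1]'(by omega)) := by
    intro he
    have hmem : (L[1]'(by omega)) ∈ M := he ▸ List.getElem_mem _
    rcases hcom _ (List.getElem_mem _) hmem with hc | hc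
    · have := chain_splt hS hL.2.1 0 (by omega) (show 1 < L.length by omega)
      rw [hc] at this
      exact splt_irrefl (hS _ (hL.2.2 _ (List.getElem_mem _))) this
    · have := chain_splt hS hL.2.1 1 (by omega) (show L.length - 1 < L.length by omega)
      rw [hc] at this
      exact splt_irrefl (hS _ (hL.2.2 _ (List.getElem_mem _))) this
  have hdisj1 : (L[1]'(by omega)).1 ∩ (M[1]'(by omega)).1 = ∅ := by
    rcases exOne4_or (h.2.2.2.2.1 _ (hL.2.2 _ (List.getElem_mem _)) _
        (hM.2.2 _ (List.getElem_mem _)) hq1ne) with hsp | hsp | hdisj | ⟨hd, _, _⟩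
    · exact absurd ⟨_, hM.2.2 _ (List.getElem_mem _), hsp, hcov1'.2.2.1⟩ hcov1.2.2.2
    · exact absurd ⟨_, hL.2.2 _ (List.getElem_mem _), hsp, hcov1.2.2.1⟩ hcov1'.2.2.2
    · exact absurd (Set.mem_union_right _ (hM1.symm ▸ hy)) fun hh =>
        disj_elim hdisj (Set.mem_union_right _ (hL1.symm ▸ hy)) hh
    · exact hd
  have ht2 : (L[0]'(by omega)).2 ≠ H := by
    intro ht2
    have hcase : ∀ (v : Set X × Set X), v ∈ 𝒮 → v.2 = H → splt v (L[0]'(by omega)) →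
        v.1 ⊂ (L[0]'(by omega)).1 := by
      intro v hv𝒮 hv2 hsp
      rcases hsp.2 with ha | hb | ⟨hc, _, _⟩
      · exfalso
        have : y ∈ (L[0]'(by omega)).1 := ha (Set.mem_union_right _ (hv2.symm ▸ hy))
        exact disj_elim (hS _ (hL.2.2 _ (List.getElem_mem _))).2 this (ht2.symm ▸ hy)
      · exfalso
        obtain ⟨z, hz⟩ := ne_empty_iff.1 (hS _ hv𝒮).1
        have hz2 : z ∈ v.2 := by
          rw [hv2, ← ht2]; exact hb (Set.mem_union_left _ hz)
        exact disj_elim (hS _ hv𝒮).2 hz hz2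
      · exact hc
    have hc1 := hcase _ (hL.2.2 _ (List.getElem_mem _)) hL1 hcov1.2.2.1
    have hc2 := hcase _ (hM.2.2 _ (List.getElem_mem _)) hM1 hcov1'.2.2.1
    exact hNC5 ⟨_, hL.2.2 _ (List.getElem_mem _), _, hM.2.2 _ (List.getElem_mem _),
      _, hL.2.2 _ (List.getElem_mem _), hL1.trans hM1.symm, hM1.trans ht2.symm,
      (by rw [hL1]; exact hH), hdisj1,
      Or.inl (Set.union_subset hc1.subset hc2.subset)⟩
  refine ⟨?_, ht2⟩
  rcases hcov1.2.2.1.2 with ha | hb | ⟨_, hc, _⟩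
  · rw [← hL1]; exact ha
  · exact absurd hb (cover_not_sub2 h hcov1 (by rw [hL1]; exact hH))
  · exact absurd (hc.symm.trans hL1) ht2

end Helpers

/-- If `P` and `P'` form a reticulation cycle in `D(𝒮)` for a 1-nested compatible
`𝒮`, then there are `(S,H), (S',H) ∈ 𝒮` with `H ≠ ∅` and `S ∩ S' = ∅` such that
`{P,P'} = {P(S,H), P(S',H)}`; in particular the common last element is `(H,∅)`. Moreover, for
every `(S'',H'') ∈ 𝒮` with `H'' ≠ ∅`, `H'' ≠ H`, the path `P(S'',H'')` has no arc in common
with `P` or `P'`. -/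
theorem reticulation_cycle_structure {X : Type*} [Fintype X] [Nonempty X]
    (𝒮 : Set (Set X × Set X)) (h : OneNestedCompatible 𝒮)
    (P P' : List (Set X × Set X))
    (hP : IsDirPath 𝒮 P) (hP' : IsDirPath 𝒮 P') (hne : P ≠ P')
    (hhead : P.head? = P'.head?) (hlast : P.getLast? = P'.getLast?)
    (hcommon : ∀ p : Set X × Set X, p ∈ P → p ∈ P' →
      P.head? = some p ∨ P.getLast? = some p) :
    ∃ S S' H : Set X,
      ((S, H) : Set X × Set X) ∈ 𝒮 ∧ ((S', H) : Set X × Set X) ∈ 𝒮 ∧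
      H ≠ ∅ ∧ S ∩ S' = ∅ ∧
      ((IsSPPath 𝒮 S H P ∧ IsSPPath 𝒮 S' H P') ∨
        (IsSPPath 𝒮 S H P' ∧ IsSPPath 𝒮 S' H P)) ∧
      P.getLast? = some ((H, (∅ : Set X)) : Set X × Set X) ∧
      (∀ S'' H'' : Set X, ((S'', H'') : Set X × Set X) ∈ 𝒮 → H'' ≠ ∅ → H'' ≠ H →
        ∀ L'' : List (Set X × Set X), IsSPPath 𝒮 S'' H'' L'' →
          ∀ a : (Set X × Set X) × (Set X × Set X),
            a ∈ L''.zip L''.tail → a ∉ P.zip P.tail ∧ a ∉ P'.zip P'.tail) := by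
  classical
  have hS := h.1
  have h2 : 2 ≤ P.length := hP.1
  have h2' : 2 ≤ P'.length := hP'.1
  have hhead0 : P[0]'(by omega) = P'[0]'(by omega) := by
    rw [List.head?_eq_getElem?, List.head?_eq_getElem?,
      List.getElem?_eq_getElem (by omega), List.getElem?_eq_getElem (by omega)] at hhead
    exact Option.some.inj hhead
  have hlastE : P[P.length-1]'(by omega) = P'[P'.length-1]'(by omega) := by
    rw [List.getLast?_eq_getElem?, List.getLast?_eq_getElem?,
      List.getElem?_eq_getElem (by omega), List.getElem?_eq_getElem (by omega)] at hlast
    exact Option.some.inj hlast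
  have h3 : 3 ≤ P.length := three_le h hP hP' hne hhead0 hlastE
  have h3' : 3 ≤ P'.length := three_le h hP' hP (Ne.symm hne) hhead0.symm hlastE.symm
  have hcomPP' : ∀ p : Set X × Set X, p ∈ P → p ∈ P' →
      p = P[0]'(by omega) ∨ p = P[P.length-1]'(by omega) := by
    intro p hm1 hm2
    rcases hcommon p hm1 hm2 with hc | hc
    · left
      rw [List.head?_eq_getElem?, List.getElem?_eq_getElem (by omega)] at hc
      exact (Option.some.inj hc).symm
    · right
      rw [List.getLast?_eq_getElem?, List.getElem?_eq_getElem (by omega)] at hc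
      exact (Option.some.inj hc).symm
  have hcomP'P : ∀ p : Set X × Set X, p ∈ P' → p ∈ P →
      p = P'[0]'(by omega) ∨ p = P'[P'.length-1]'(by omega) := by
    intro p hm1 hm2
    rcases hcomPP' p hm2 hm1 with hc | hc
    · left; rw [hc, hhead0]
    · right; rw [hc, hlastE]
  have hcova : SPCovers 𝒮 (P[P.length-2]'(by omega)) (P[P.length-1]'(by omega)) := by
    have hcc := chain_cover hP.2.1 (i := P.length-2) (by omega)
    have he : P.length - 2 + 1 = P.length - 1 := by omega
    simpa only [he] using hcc
  have hcova' : SPCovers 𝒮 (P'[P'.length-2]'(by omega)) (P[P.length-1]'(by omega)) := by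
    have hcc := chain_cover hP'.2.1 (i := P'.length-2) (by omega)
    have he : P'.length - 2 + 1 = P'.length - 1 := by omega
    rw [hlastE]
    simpa only [he] using hcc
  have hane : (P[P.length-2]'(by omega)) ≠ (P'[P'.length-2]'(by omega)) := by
    intro he
    have hmem : (P[P.length-2]'(by omega)) ∈ P' := he ▸ List.getElem_mem _
    rcases hcomPP' _ (List.getElem_mem _) hmem with hc | hc
    · have hsp := chain_splt hS hP.2.1 0 (by omega) (show P.length - 2 < P.length by omega)
      rw [hc] at hsp
      exact splt_irrefl (hS _ (hP.2.2 _ (List.getElem_mem _))) hsp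
    · have hsp := chain_splt hS hP.2.1 (P.length-2) (by omega)
        (show P.length - 1 < P.length by omega)
      rw [hc] at hsp
      exact splt_irrefl (hS _ (hP.2.2 _ (List.getElem_mem _))) hsp
  obtain ⟨hHeq, hHne, hSdisj, hbeq⟩ := covers_covers h hcova hcova' hane
  set H : Set X := (P[P.length-2]'(by omega)).2 with hHdef
  have hAM : (P'[P'.length-2]'(by omega)).2 = H := hHeq.symm
  -- no bad interior elements
  have hnobad : ¬ ∃ p : Set X × Set X,
      (∃ i, ∃ (hi1 : 1 ≤ i) (hi2 : i ≤ P.length-2), p = P[i]'(by omega) ∧ p.2 ≠ H) ∨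
      (∃ i, ∃ (hi1 : 1 ≤ i) (hi2 : i ≤ P'.length-2), p = P'[i]'(by omega) ∧ p.2 ≠ H) := by
    rintro ⟨p0, hp0⟩
    have hTfin : {p : Set X × Set X |
        (∃ i, ∃ (hi1 : 1 ≤ i) (hi2 : i ≤ P.length-2), p = P[i]'(by omega) ∧ p.2 ≠ H) ∨
        (∃ i, ∃ (hi1 : 1 ≤ i) (hi2 : i ≤ P'.length-2), p = P'[i]'(by omega) ∧ p.2 ≠ H)}.Finite :=
      Set.toFinite _
    obtain ⟨q, hqT, hqmin⟩ := hTfin.toFinset.exists_min_image msr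
      ⟨p0, by rw [Set.Finite.mem_toFinset]; exact hp0⟩
    rw [Set.Finite.mem_toFinset] at hqT
    have hq𝒮 : q ∈ 𝒮 := by
      rcases hqT with ⟨i, hi1, hi2, rfl, _⟩ | ⟨i, hi1, hi2, rfl, _⟩
      · exact hP.2.2 _ (List.getElem_mem _)
      · exact hP'.2.2 _ (List.getElem_mem _)
    have hqmin' : ∀ p : Set X × Set X,
        ((∃ i, ∃ (hi1 : 1 ≤ i) (hi2 : i ≤ P.length-2), p = P[i]'(by omega) ∧ p.2 ≠ H) ∨
         (∃ i, ∃ (hi1 : 1 ≤ i) (hi2 : i ≤ P'.length-2), p = P'[i]'(by omega) ∧ p.2 ≠ H)) →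
        ¬ splt p q := by
      intro p hpB hsp
      have hm1 := hqmin p (by rw [Set.Finite.mem_toFinset]; exact hpB)
      have hm2 := msr_lt (hS _ hq𝒮) hsp
      omega
    rcases hqT with ⟨j, hj1, hj2, hqe, hbad⟩ | ⟨j, hj1, hj2, hqe, hbad⟩
    · subst hqe
      exact no_bad h hP hP' h3 h3' hhead0 hcomPP' hHne rfl hAM hj1 hj2 hbad
        (fun i hi1 hi2 hbd => hqmin' _ (Or.inl ⟨i, hi1, hi2, rfl, hbd⟩))
        (fun i hi1 hi2 hbd => hqmin' _ (Or.inr ⟨i, hi1, hi2, rfl, hbd⟩))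
    · subst hqe
      exact no_bad h hP' hP h3' h3 hhead0.symm hcomP'P hHne hAM rfl hj1 hj2 hbad
        (fun i hi1 hi2 hbd => hqmin' _ (Or.inr ⟨i, hi1, hi2, rfl, hbd⟩))
        (fun i hi1 hi2 hbd => hqmin' _ (Or.inl ⟨i, hi1, hi2, rfl, hbd⟩))
  have hintP : ∀ i (hi1 : 1 ≤ i) (hi2 : i ≤ P.length-2), (P[i]'(by omega)).2 = H := by
    intro i hi1 hi2
    by_contra hcb
    exact hnobad ⟨_, Or.inl ⟨i, hi1, hi2, rfl, hcb⟩⟩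
  have hintP' : ∀ i (hi1 : 1 ≤ i) (hi2 : i ≤ P'.length-2), (P'[i]'(by omega)).2 = H := by
    intro i hi1 hi2
    by_contra hcb
    exact hnobad ⟨_, Or.inr ⟨i, hi1, hi2, rfl, hcb⟩⟩
  have hdP := head_cond h hP hP' h3 h3' hhead0 hcomPP' hHne
    (hintP 1 le_rfl (by omega)) (hintP' 1 le_rfl (by omega))
  have hdP' := head_cond h hP' hP h3' h3 hhead0.symm hcomP'P hHne
    (hintP' 1 le_rfl (by omega)) (hintP 1 le_rfl (by omega))
  have hchP := interior_chain h hP h3 hHne hintP 1 le_rfl (by omega)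
  have hchP' := interior_chain h hP' h3' hHne hintP' 1 le_rfl (by omega)
  have pathP : IsSPPath 𝒮 (P[P.length-2]'(by omega)).1 H P := by
    refine ⟨h3, hP.2.1, ?_, ?_, ?_, ?_⟩
    · rw [List.getLast?_eq_getElem?, List.getElem?_eq_getElem (by omega), hbeq]
    · intro i p hi1 hi2 hp
      rw [List.getElem?_eq_getElem (by omega)] at hp
      have hv := hintP i hi1 (by omega)
      exact (Option.some.inj hp) ▸ hv
    · refine ⟨P.length-2, by omega, by omega, ?_⟩
      rw [List.getElem?_eq_getElem (by omega)]
    · refine ⟨P[0]'(by omega), ?_, ?_, hdP.2⟩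
      · rw [List.head?_eq_getElem?, List.getElem?_eq_getElem (by omega)]
      · exact Set.union_subset (hchP.trans (Set.subset_union_left.trans hdP.1))
          (Set.subset_union_right.trans hdP.1)
  have pathP' : IsSPPath 𝒮 (P'[P'.length-2]'(by omega)).1 H P' := by
    refine ⟨h3', hP'.2.1, ?_, ?_, ?_, ?_⟩
    · rw [List.getLast?_eq_getElem?, List.getElem?_eq_getElem (by omega), ← hlastE, hbeq]
    · intro i p hi1 hi2 hp
      rw [List.getElem?_eq_getElem (by omega)] at hp
      have hv := hintP' i hi1 (by omega)
      exact (Option.some.inj hp) ▸ hv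
    · refine ⟨P'.length-2, by omega, by omega, ?_⟩
      rw [List.getElem?_eq_getElem (by omega), ← hAM]
    · refine ⟨P'[0]'(by omega), ?_, ?_, hdP'.2⟩
      · rw [List.head?_eq_getElem?, List.getElem?_eq_getElem (by omega)]
      · exact Set.union_subset (hchP'.trans (Set.subset_union_left.trans hdP'.1))
          (Set.subset_union_right.trans hdP'.1)
  refine ⟨(P[P.length-2]'(by omega)).1, (P'[P'.length-2]'(by omega)).1, H,
    ?_, ?_, hHne, hSdisj, Or.inl ⟨pathP, pathP'⟩, ?_, ?_⟩
  · show ((P[P.length-2]'(by omega)).1, H) ∈ 𝒮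
    rw [hHdef]
    exact hP.2.2 _ (List.getElem_mem _)
  · show ((P'[P'.length-2]'(by omega)).1, H) ∈ 𝒮
    rw [← hAM]
    exact hP'.2.2 _ (List.getElem_mem _)
  · rw [List.getLast?_eq_getElem?, List.getElem?_eq_getElem (by omega), hbeq]
  · intro S'' H'' h𝒮'' hne'' hneH L'' hLpath a'' ha''
    have hv'' := path_snd hLpath ha''
    constructor
    · intro haP
      rcases path_snd pathP haP with hv2 | hv2
      · rcases hv'' with hv | hv
        · exact hneH (hv.symm.trans hv2)
        · rw [hv] at hv2
          exact hHne hv2.symm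
      · rcases hv'' with hv | hv
        · rw [hv2] at hv
          exact hne'' hv.symm
        · exact hneH (congrArg Prod.fst (hv.symm.trans hv2))
    · intro haP
      rcases path_snd pathP' haP with hv2 | hv2
      · rcases hv'' with hv | hv
        · exact hneH (hv.symm.trans hv2)
        · rw [hv] at hv2
          exact hHne hv2.symm
      · rcases hv'' with hv | hv
        · rw [hv2] at hv
          exact hne'' hv.symm
        · exact hneH (congrArg Prod.fst (hv.symm.trans hv2))
end

section
/- Let 𝒮 be a 1-nested compatible set pair system on X and suppose (S',H') ∈ 𝒮 covers exactly one element of 𝒮 in the partial order (𝒮,≤), say the set pair (S,H). Then H ≠ ∅, H' = ∅, and S' = S ∪ H. -/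
open Set

variable {X : Type*}

/-- Nothing is strictly below a singleton pair `({x},∅)`. -/
lemma not_splt_singleton {X : Type*} {p : Set X × Set X} (hp : IsSetPair p) (x : X) :
    ¬ splt p (({x}, (∅ : Set X)) : Set X × Set X) := by
  rintro ⟨hne, hcase⟩
  obtain ⟨hp1, hp12⟩ := hp
  rcases hcase with ha | hb | ⟨_, _, hc⟩
  · simp only at ha
    have h1 : p.1 ⊆ ({x} : Set X) := subset_trans subset_union_left ha
    have h2 : p.2 ⊆ ({x} : Set X) := subset_trans subset_union_right ha
    rcases (Set.subset_singleton_iff_eq).mp h1 with h1' | h1'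
    · exact hp1 h1'
    rcases (Set.subset_singleton_iff_eq).mp h2 with h2' | h2'
    · exact hne (Prod.ext h1' h2')
    · rw [h1', h2'] at hp12
      simp at hp12
  · simp only at hb
    rw [Set.subset_empty_iff, Set.union_empty_iff] at hb
    exact hp1 hb.1
  · exact hc rfl

/-- A numeric measure strictly monotone along `splt` between set pairs. -/
noncomputable def mes {X : Type*} [Fintype X] (p : Set X × Set X) : ℕ :=
  (p.1 ∪ p.2).ncard * (Fintype.card X + 1) + p.1.ncard

lemma splt_subset_union {X : Type*} {p q : Set X × Set X}
    (hp : IsSetPair p) (hq : IsSetPair q) (h : splt p q) :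
    p.1 ∪ p.2 ⊆ q.1 ∪ q.2 ∧ (p.1 ∪ p.2 = q.1 ∪ q.2 → p.1 ⊂ q.1) := by
  obtain ⟨hne, hcase⟩ := h
  rcases hcase with ha | hb | ⟨hss, h2, hne2⟩
  · refine ⟨subset_trans ha subset_union_left, ?_⟩
    intro heq
    have hq2 : q.2 = ∅ := by
      have h1 : q.2 ⊆ q.1 := by
        intro y hy
        exact ha (heq ▸ (Set.mem_union_right _ hy))
      have h2 : q.2 ⊆ q.1 ∩ q.2 := Set.subset_inter h1 (subset_refl _)
      rw [hq.2] at h2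
      exact Set.subset_empty_iff.mp h2
    have hsub : p.1 ⊆ q.1 := subset_trans subset_union_left ha
    refine ssubset_of_subset_of_ne hsub ?_
    intro heq1
    have hp2 : p.2 = ∅ := by
      have h1 : p.2 ⊆ p.1 := by
        intro y hy
        have : y ∈ q.1 ∪ q.2 := heq ▸ (Set.mem_union_right _ hy)
        rw [hq2, Set.union_empty] at this
        exact heq1 ▸ this
      have h2 : p.2 ⊆ p.1 ∩ p.2 := Set.subset_inter h1 (subset_refl _)
      rw [hp.2] at h2
      exact Set.subset_empty_iff.mp h2
    exact hne (Prod.ext heq1 (hp2.trans hq2.symm))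
  · refine ⟨subset_trans hb subset_union_right, ?_⟩
    intro heq
    exfalso
    have h1 : q.1 ⊆ q.2 := by
      intro y hy
      exact hb (heq ▸ (Set.mem_union_left _ hy))
    have h2 : q.1 ⊆ q.1 ∩ q.2 := Set.subset_inter (subset_refl _) h1
    rw [hq.2] at h2
    exact hq.1 (Set.subset_empty_iff.mp h2)
  · exact ⟨Set.union_subset_union hss.subset (h2 ▸ subset_refl _), fun _ => hss⟩

lemma mes_lt {X : Type*} [Fintype X] {p q : Set X × Set X}
    (hp : IsSetPair p) (hq : IsSetPair q) (h : splt p q) : mes p < mes q := by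
  obtain ⟨hsub, himp⟩ := splt_subset_union hp hq h
  by_cases heq : p.1 ∪ p.2 = q.1 ∪ q.2
  · have h1 : p.1.ncard < q.1.ncard := Set.ncard_lt_ncard (himp heq) (Set.toFinite _)
    unfold mes
    rw [heq]
    omega
  · have h1 : (p.1 ∪ p.2).ncard < (q.1 ∪ q.2).ncard :=
      Set.ncard_lt_ncard (ssubset_of_subset_of_ne hsub heq) (Set.toFinite _)
    have h2 : p.1.ncard ≤ Fintype.card X := by
      have := Set.ncard_le_ncard (Set.subset_univ p.1) (Set.toFinite _)
      simpa [Set.ncard_univ, Nat.card_eq_fintype_card] using this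
    unfold mes
    nlinarith

lemma mem_union_of_splt {X : Type*} {x : X} {q r : Set X × Set X}
    (hx : x ∈ q.1 ∪ q.2) (h : splt q r) : x ∈ r.1 ∪ r.2 := by
  obtain ⟨_, hcase⟩ := h
  rcases hcase with ha | hb | ⟨hss, h2, _⟩
  · exact Set.mem_union_left _ (ha hx)
  · exact Set.mem_union_right _ (hb hx)
  · rcases hx with hx | hx
    · exact Set.mem_union_left _ (hss.subset hx)
    · exact Set.mem_union_right _ (h2 ▸ hx)

/-- If `𝒮` is 1-nested compatible and `(S',H') ∈ 𝒮` covers exactly one element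
`(S,H)` of `𝒮`, then `H ≠ ∅`, `H' = ∅` and `S' = S ∪ H`. -/
theorem unique_child_structure {X : Type*} [Fintype X] [Nonempty X]
    (𝒮 : Set (Set X × Set X)) (h : OneNestedCompatible 𝒮)
    (S' H' S H : Set X)
    (hcov : SPCovers 𝒮 ((S', H') : Set X × Set X) (S, H))
    (huniq : ∀ q : Set X × Set X, SPCovers 𝒮 ((S', H') : Set X × Set X) q → q = (S, H)) :
    H ≠ ∅ ∧ H' = ∅ ∧ S' = S ∪ H := by
  obtain ⟨hS'mem, hSHmem, hlt, hnomid⟩ := hcov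
  obtain ⟨hsps, hnc1, hnc2, hnc3, hnc4, hnc5⟩ := h
  have hpairSH : IsSetPair ((S, H) : Set X × Set X) := hsps _ hSHmem
  have hpairS' : IsSetPair ((S', H') : Set X × Set X) := hsps _ hS'mem
  have key : S' ∪ H' ⊆ S ∪ H := by
    intro x hx
    set T : Set (Set X × Set X) :=
      {r | r ∈ 𝒮 ∧ x ∈ r.1 ∪ r.2 ∧ splt r ((S', H') : Set X × Set X)} with hTdef
    have hxT : (({x}, ∅) : Set X × Set X) ∈ T := by
      refine ⟨hnc2 x, by simp, ?_, ?_⟩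
      · intro heq
        exact not_splt_singleton hpairSH x (heq ▸ hlt)
      · rcases hx with hx | hx
        · left
          simpa using hx
        · right; left
          simpa using hx
    obtain ⟨q, hqT, hqmax⟩ :=
      Set.Finite.exists_maximalFor mes T (Set.toFinite T) ⟨_, hxT⟩
    have hcovq : SPCovers 𝒮 ((S', H') : Set X × Set X) q := by
      refine ⟨hS'mem, hqT.1, hqT.2.2, ?_⟩
      rintro ⟨r, hr𝒮, hqr, hrS'⟩
      have hrT : r ∈ T := ⟨hr𝒮, mem_union_of_splt hqT.2.1 hqr, hrS'⟩
      have hlt' := mes_lt (hsps _ hqT.1) (hsps _ hr𝒮) hqr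
      exact absurd (hqmax hrT (le_of_lt hlt')) (not_le_of_gt hlt')
    have hq := huniq q hcovq
    rw [hq] at hqT
    exact hqT.2.1
  obtain ⟨hne, hcase⟩ := hlt
  rcases hcase with ha | hb | ⟨hss, h2, hne2⟩
  · simp only at ha
    have hS'eq : S' = S ∪ H :=
      subset_antisymm (subset_trans subset_union_left key) ha
    have hH' : H' = ∅ := by
      have h1 : H' ⊆ S' := subset_trans (subset_trans subset_union_right key) ha
      have h2 : H' ⊆ S' ∩ H' := Set.subset_inter h1 (subset_refl _)
      rw [hpairS'.2] at h2
      exact Set.subset_empty_iff.mp h2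
    refine ⟨?_, hH', hS'eq⟩
    intro hH
    apply hne
    have hS : S = S' := by rw [hS'eq, hH, Set.union_empty]
    exact Prod.ext hS (hH.trans hH'.symm)
  · exfalso
    simp only at hb
    obtain ⟨y, hy⟩ := Set.nonempty_iff_ne_empty.mpr hpairS'.1
    have hyH' : y ∈ H' := hb (key (Set.mem_union_left _ hy))
    have : y ∈ S' ∩ H' := ⟨hy, hyH'⟩
    rw [hpairS'.2] at this
    exact this
  · exfalso
    simp only at hss h2 hne2
    apply hss.2
    intro y hy
    have hyu : y ∈ S ∪ H := key (Set.mem_union_left _ hy)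
    rcases hyu with hyS | hyH
    · exact hyS
    · exfalso
      have : y ∈ S' ∩ H' := ⟨hy, h2 ▸ hyH⟩
      rw [hpairS'.2] at this
      exact this
end

section
/- If 𝒮 is a 1-nested compatible set pair system on a set X with |X| = n, then |𝒮| ≤ 3n − 2. -/
open Set

variable {X : Type*}

section Aux
variable {X : Type*} [Fintype X]

lemma chain_card_aux (k : ℕ) : ∀ 𝒞 : Set (Set X), 𝒞.ncard ≤ k →
    (∀ T ∈ 𝒞, T.Nonempty) → (∀ T₁ ∈ 𝒞, ∀ T₂ ∈ 𝒞, T₁ ⊆ T₂ ∨ T₂ ⊆ T₁) →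
    𝒞.ncard ≤ (⋃₀ 𝒞).ncard := by
  induction k with
  | zero => intro 𝒞 hk _ _; omega
  | succ k ih =>
    intro 𝒞 hk hne hch
    rcases 𝒞.eq_empty_or_nonempty with rfl | h𝒞
    · simp
    obtain ⟨S₀, hS₀, hmin⟩ := Set.exists_min_image 𝒞 Set.ncard (Set.toFinite 𝒞) h𝒞
    have hcont : ∀ T ∈ 𝒞, T ≠ S₀ → S₀ ⊆ T := by
      intro T hT hTne
      rcases hch T hT S₀ hS₀ with h | h
      · exact absurd (Set.eq_of_subset_of_ncard_le h (hmin T hT) (Set.toFinite _)) hTne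
      · exact h
    set 𝒞' : Set (Set X) := (fun T => T \ S₀) '' (𝒞 \ {S₀}) with h𝒞'
    have hinj : Set.InjOn (fun T => T \ S₀) (𝒞 \ {S₀}) := by
      intro T₁ h₁ T₂ h₂ he
      have he' : T₁ \ S₀ = T₂ \ S₀ := he
      simp only [Set.mem_diff, Set.mem_singleton_iff] at h₁ h₂
      have c₁ := hcont T₁ h₁.1 h₁.2
      have c₂ := hcont T₂ h₂.1 h₂.2
      ext x
      constructor
      · intro hx
        by_cases hxS : x ∈ S₀
        · exact c₂ hxS
        · have : x ∈ T₁ \ S₀ := ⟨hx, hxS⟩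
          rw [he'] at this; exact this.1
      · intro hx
        by_cases hxS : x ∈ S₀
        · exact c₁ hxS
        · have : x ∈ T₂ \ S₀ := ⟨hx, hxS⟩
          rw [← he'] at this; exact this.1
    have hcard' : 𝒞'.ncard = 𝒞.ncard - 1 := by
      rw [h𝒞', Set.ncard_image_of_injOn hinj]
      have hs : ({S₀} : Set (Set X)) ⊆ 𝒞 := by simp [hS₀]
      rw [Set.ncard_diff hs (Set.toFinite _), Set.ncard_singleton]
    have hk' : 𝒞'.ncard ≤ k := by
      have h1 : 0 < 𝒞.ncard := (Set.ncard_pos (Set.toFinite _)).mpr ⟨S₀, hS₀⟩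
      omega
    have hne' : ∀ T ∈ 𝒞', T.Nonempty := by
      rintro T ⟨T', hT', rfl⟩
      simp only [Set.mem_diff, Set.mem_singleton_iff] at hT'
      have hss : S₀ ⊂ T' := (hcont T' hT'.1 hT'.2).ssubset_of_ne (Ne.symm hT'.2)
      obtain ⟨x, hx1, hx2⟩ := Set.exists_of_ssubset hss
      exact ⟨x, hx1, hx2⟩
    have hch' : ∀ T₁ ∈ 𝒞', ∀ T₂ ∈ 𝒞', T₁ ⊆ T₂ ∨ T₂ ⊆ T₁ := by
      rintro T₁ ⟨T₁', h₁, rfl⟩ T₂ ⟨T₂', h₂, rfl⟩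
      rcases hch T₁' h₁.1 T₂' h₂.1 with h | h
      · exact Or.inl (Set.diff_subset_diff_left h)
      · exact Or.inr (Set.diff_subset_diff_left h)
    have h1 : 𝒞'.ncard ≤ (⋃₀ 𝒞').ncard := ih 𝒞' hk' hne' hch'
    have hsub : ⋃₀ 𝒞' ⊆ (⋃₀ 𝒞) \ S₀ := by
      rintro x ⟨T, ⟨T', hT', rfl⟩, hx⟩
      have hx' : x ∈ T' \ S₀ := hx
      exact ⟨⟨T', hT'.1, hx'.1⟩, hx'.2⟩
    have h2 : (⋃₀ 𝒞').ncard ≤ ((⋃₀ 𝒞) \ S₀).ncard := Set.ncard_le_ncard hsub (Set.toFinite _)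
    have h3 : S₀ ⊆ ⋃₀ 𝒞 := fun x hx => ⟨S₀, hS₀, hx⟩
    have h4 : ((⋃₀ 𝒞) \ S₀).ncard = (⋃₀ 𝒞).ncard - S₀.ncard := Set.ncard_diff h3 (Set.toFinite _)
    have h5 : 0 < S₀.ncard := (Set.ncard_pos (Set.toFinite _)).mpr (hne S₀ hS₀)
    have h6 : S₀.ncard ≤ (⋃₀ 𝒞).ncard := Set.ncard_le_ncard h3 (Set.toFinite _)
    omega

lemma chain_card' (𝒞 : Set (Set X)) (hne : ∀ T ∈ 𝒞, T.Nonempty)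
    (hch : ∀ T₁ ∈ 𝒞, ∀ T₂ ∈ 𝒞, T₁ ⊆ T₂ ∨ T₂ ⊆ T₁) : 𝒞.ncard ≤ (⋃₀ 𝒞).ncard :=
  chain_card_aux 𝒞.ncard 𝒞 le_rfl hne hch

lemma two_chain_card (𝒞 : Set (Set X)) (hne : ∀ T ∈ 𝒞, T.Nonempty)
    (hF1 : ∀ T₁ ∈ 𝒞, ∀ T₂ ∈ 𝒞, T₁ ⊆ T₂ ∨ T₂ ⊆ T₁ ∨ T₁ ∩ T₂ = ∅)
    (hF2 : ∀ T₁ ∈ 𝒞, ∀ T₂ ∈ 𝒞, ∀ T₃ ∈ 𝒞, T₁ ∩ T₂ = ∅ →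
      ¬(T₁ ∪ T₂ ⊆ T₃ ∨ (T₁ ∪ T₂) ∩ T₃ = ∅)) :
    𝒞.ncard ≤ (⋃₀ 𝒞).ncard := by
  rcases 𝒞.eq_empty_or_nonempty with rfl | h𝒞
  · simp
  have hmax : ∀ T ∈ 𝒞, ∃ M ∈ 𝒞, T ⊆ M ∧ ∀ T' ∈ 𝒞, M ⊆ T' → T' = M := by
    intro T hT
    obtain ⟨M, hM, hMmax⟩ := Set.exists_max_image {T' ∈ 𝒞 | T ⊆ T'} Set.ncard
      (Set.toFinite _) ⟨T, hT, subset_rfl⟩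
    refine ⟨M, hM.1, hM.2, ?_⟩
    intro T' hT' hsub
    exact (Set.eq_of_subset_of_ncard_le hsub
      (hMmax T' ⟨hT', hM.2.trans hsub⟩) (Set.toFinite _)).symm
  have hchain : ∀ M ∈ 𝒞, ∀ T₁ ∈ 𝒞, ∀ T₂ ∈ 𝒞, T₁ ⊆ M → T₂ ⊆ M →
      T₁ ⊆ T₂ ∨ T₂ ⊆ T₁ := by
    intro M hM T₁ h₁ T₂ h₂ hs₁ hs₂
    rcases hF1 T₁ h₁ T₂ h₂ with h | h | h
    · exact Or.inl h
    · exact Or.inr h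
    · exact absurd (Or.inl (Set.union_subset hs₁ hs₂)) (hF2 T₁ h₁ T₂ h₂ M hM h)
  obtain ⟨T₀, hT₀⟩ := h𝒞
  obtain ⟨M₁, hM₁, _, hM₁max⟩ := hmax T₀ hT₀
  by_cases hall : ∀ T ∈ 𝒞, T ⊆ M₁
  · exact chain_card' 𝒞 hne (fun T₁ h₁ T₂ h₂ => hchain M₁ hM₁ T₁ h₁ T₂ h₂ (hall T₁ h₁) (hall T₂ h₂))
  push_neg at hall
  obtain ⟨T₁, hT₁, hT₁n⟩ := hall
  obtain ⟨M₂, hM₂, hT₁M₂, hM₂max⟩ := hmax T₁ hT₁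
  have hMne : M₂ ≠ M₁ := fun h => hT₁n (h ▸ hT₁M₂)
  have hdisj : ∀ M ∈ 𝒞, (∀ T' ∈ 𝒞, M ⊆ T' → T' = M) → M ≠ M₁ → M ∩ M₁ = ∅ := by
    intro M hM hMmax hne'
    rcases hF1 M hM M₁ hM₁ with h | h | h
    · exact absurd (hMmax M₁ hM₁ h).symm hne'
    · exact absurd (hM₁max M hM h) hne'
    · exact h
  have hM₁₂ : M₂ ∩ M₁ = ∅ := hdisj M₂ hM₂ hM₂max hMne
  have hcover : ∀ T ∈ 𝒞, T ⊆ M₁ ∨ T ⊆ M₂ := by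
    intro T hT
    obtain ⟨M, hM, hTM, hMmax⟩ := hmax T hT
    by_cases h1 : M = M₁
    · exact Or.inl (h1 ▸ hTM)
    by_cases h2 : M = M₂
    · exact Or.inr (h2 ▸ hTM)
    exfalso
    have d1 : M ∩ M₁ = ∅ := hdisj M hM hMmax h1
    have d2 : M ∩ M₂ = ∅ := by
      rcases hF1 M hM M₂ hM₂ with h | h | h
      · exact absurd (hMmax M₂ hM₂ h).symm h2
      · exact absurd (hM₂max M hM h) h2
      · exact h
    refine hF2 M₂ hM₂ M₁ hM₁ M hM hM₁₂ (Or.inr ?_)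
    rw [Set.union_inter_distrib_right]
    rw [Set.inter_comm M₂ M, Set.inter_comm M₁ M] at *
    rw [d1, d2]
    simp
  set C₁ := {T ∈ 𝒞 | T ⊆ M₁} with hC₁
  set C₂ := {T ∈ 𝒞 | T ⊆ M₂} with hC₂
  have hcup : 𝒞 = C₁ ∪ C₂ := by
    ext T; constructor
    · intro hT
      rcases hcover T hT with h | h
      · exact Or.inl ⟨hT, h⟩
      · exact Or.inr ⟨hT, h⟩
    · rintro (⟨h, _⟩ | ⟨h, _⟩) <;> exact h
  have hc₁ : C₁.ncard ≤ (⋃₀ C₁).ncard :=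
    chain_card' C₁ (fun T hT => hne T hT.1)
      (fun T₁ h₁ T₂ h₂ => hchain M₁ hM₁ T₁ h₁.1 T₂ h₂.1 h₁.2 h₂.2)
  have hc₂ : C₂.ncard ≤ (⋃₀ C₂).ncard :=
    chain_card' C₂ (fun T hT => hne T hT.1)
      (fun T₁ h₁ T₂ h₂ => hchain M₂ hM₂ T₁ h₁.1 T₂ h₂.1 h₁.2 h₂.2)
  have hu₁ : ⋃₀ C₁ ⊆ M₁ := Set.sUnion_subset (fun T hT => hT.2)
  have hu₂ : ⋃₀ C₂ ⊆ M₂ := Set.sUnion_subset (fun T hT => hT.2)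
  have hdu : Disjoint (⋃₀ C₁) (⋃₀ C₂) := by
    rw [Set.disjoint_iff_inter_eq_empty]
    have : ⋃₀ C₁ ∩ ⋃₀ C₂ ⊆ M₁ ∩ M₂ := Set.inter_subset_inter hu₁ hu₂
    rw [Set.inter_comm M₁ M₂] at this
    rw [hM₁₂] at this
    exact Set.subset_empty_iff.mp this
  have h₁ : 𝒞.ncard ≤ C₁.ncard + C₂.ncard := by
    rw [hcup]; exact Set.ncard_union_le C₁ C₂
  have h₂ : (⋃₀ C₁).ncard + (⋃₀ C₂).ncard = (⋃₀ C₁ ∪ ⋃₀ C₂).ncard :=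
    (Set.ncard_union_eq hdu (Set.toFinite _) (Set.toFinite _)).symm
  have h₃ : (⋃₀ C₁ ∪ ⋃₀ C₂).ncard ≤ (⋃₀ 𝒞).ncard := by
    apply Set.ncard_le_ncard _ (Set.toFinite _)
    apply Set.union_subset <;> apply Set.sUnion_subset_sUnion
    · exact fun T hT => hT.1
    · exact fun T hT => hT.1
  omega

/-- Contract the set `R` to the point `x₀`. -/
def ctr (R : Set X) (x₀ : X) (T : Set X) : Set X :=
  (T \ R) ∪ {x | x = x₀ ∧ R ⊆ T}

section ctr
variable {R : Set X} {x₀ : X}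
set_option linter.unusedSectionVars false

lemma ctr_of_subset {T : Set X} (h : R ⊆ T) : ctr R x₀ T = (T \ R) ∪ {x₀} := by
  unfold ctr; ext y; simp only [Set.mem_union, Set.mem_setOf_eq, Set.mem_singleton_iff]
  tauto

lemma ctr_of_disj (hx₀ : x₀ ∈ R) {T : Set X} (h : R ∩ T = ∅) : ctr R x₀ T = T := by
  unfold ctr; ext y
  simp only [Set.mem_union, Set.mem_setOf_eq, Set.mem_diff]
  constructor
  · rintro (⟨hy, _⟩ | ⟨rfl, hsub⟩)
    · exact hy
    · exact absurd (Set.mem_inter hx₀ (hsub hx₀)) (by rw [h]; exact id)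
  · intro hy
    refine Or.inl ⟨hy, fun hyR => ?_⟩
    exact absurd (Set.mem_inter hyR hy) (by rw [h]; exact id)

lemma mem_ctr_x₀ (hx₀ : x₀ ∈ R) {T : Set X} : x₀ ∈ ctr R x₀ T ↔ R ⊆ T := by
  constructor
  · intro h
    rcases h with ⟨_, hn⟩ | ⟨_, hs⟩
    · exact absurd hx₀ hn
    · exact hs
  · intro h; exact Or.inr ⟨rfl, h⟩

lemma ctr_mono {T₁ T₂ : Set X} (h : T₁ ⊆ T₂) : ctr R x₀ T₁ ⊆ ctr R x₀ T₂ := by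
  unfold ctr
  rintro y (⟨hy, hyR⟩ | ⟨rfl, hsub⟩)
  · exact Or.inl ⟨h hy, hyR⟩
  · exact Or.inr ⟨rfl, hsub.trans h⟩

lemma ctr_disj (hx₀ : x₀ ∈ R) {T₁ T₂ : Set X} (h : T₁ ∩ T₂ = ∅) :
    ctr R x₀ T₁ ∩ ctr R x₀ T₂ = ∅ := by
  have hni : ∀ a (T T' : Set X), a ∈ T ∩ T' → T ∩ T' = ∅ → False := by
    intro a T T' ha he; rw [he] at ha; exact ha
  ext y
  simp only [Set.mem_inter_iff, Set.mem_empty_iff_false, iff_false]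
  rintro ⟨hy1, hy2⟩
  rcases hy1 with ⟨h1, h1R⟩ | ⟨he1, h1s⟩
  · rcases hy2 with ⟨h2, h2R⟩ | ⟨he2, h2s⟩
    · exact hni y T₁ T₂ ⟨h1, h2⟩ h
    · exact h1R (he2 ▸ hx₀)
  · rcases hy2 with ⟨h2, h2R⟩ | ⟨he2, h2s⟩
    · exact h2R (he1 ▸ hx₀)
    · exact hni x₀ T₁ T₂ ⟨h1s hx₀, h2s hx₀⟩ h

lemma ctr_nonempty (hx₀ : x₀ ∈ R) {T : Set X} (hok : R ⊆ T ∨ R ∩ T = ∅) (h : T.Nonempty) :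
    (ctr R x₀ T).Nonempty := by
  rcases hok with hok | hok
  · exact ⟨x₀, (mem_ctr_x₀ hx₀).mpr hok⟩
  · rw [ctr_of_disj hx₀ hok]; exact h

lemma ctr_subset_ground {T A : Set X} (h : T ⊆ A) :
    ctr R x₀ T ⊆ insert x₀ (A \ R) := by
  unfold ctr
  rintro y (⟨hy, hyR⟩ | ⟨rfl, _⟩)
  · exact Set.mem_insert_iff.mpr (Or.inr ⟨h hy, hyR⟩)
  · exact Set.mem_insert _ _

lemma ctr_pull_sub (hx₀ : x₀ ∈ R) {T₁ T₂ : Set X} (hok₁ : R ⊆ T₁ ∨ R ∩ T₁ = ∅)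
    (h : ctr R x₀ T₁ ⊆ ctr R x₀ T₂) : T₁ ⊆ T₂ := by
  intro t ht
  by_cases htR : t ∈ R
  · have hR1 : R ⊆ T₁ := by
      rcases hok₁ with h' | h'
      · exact h'
      · exact absurd (Set.mem_inter htR ht) (by rw [h']; exact id)
    have : x₀ ∈ ctr R x₀ T₂ := h ((mem_ctr_x₀ hx₀).mpr hR1)
    exact (mem_ctr_x₀ hx₀).mp this htR
  · have : t ∈ ctr R x₀ T₂ := h (Or.inl ⟨ht, htR⟩)
    rcases this with ⟨h', _⟩ | ⟨rfl, _⟩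
    · exact h'
    · exact absurd hx₀ htR

lemma ctr_pull_disj (hx₀ : x₀ ∈ R) {T₁ T₂ : Set X} (hok₁ : R ⊆ T₁ ∨ R ∩ T₁ = ∅)
    (hok₂ : R ⊆ T₂ ∨ R ∩ T₂ = ∅)
    (h : ctr R x₀ T₁ ∩ ctr R x₀ T₂ = ∅) : T₁ ∩ T₂ = ∅ := by
  ext t
  simp only [Set.mem_inter_iff, Set.mem_empty_iff_false, iff_false]
  rintro ⟨h1, h2⟩
  have hni : ∀ a, a ∈ ctr R x₀ T₁ → a ∈ ctr R x₀ T₂ → False := by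
    intro a ha1 ha2
    have : a ∈ ctr R x₀ T₁ ∩ ctr R x₀ T₂ := ⟨ha1, ha2⟩
    rw [h] at this; exact this
  by_cases htR : t ∈ R
  · have hR1 : R ⊆ T₁ := by
      rcases hok₁ with h' | h'
      · exact h'
      · exact absurd (Set.mem_inter htR h1) (by rw [h']; exact id)
    have hR2 : R ⊆ T₂ := by
      rcases hok₂ with h' | h'
      · exact h'
      · exact absurd (Set.mem_inter htR h2) (by rw [h']; exact id)
    exact hni x₀ ((mem_ctr_x₀ hx₀).mpr hR1) ((mem_ctr_x₀ hx₀).mpr hR2)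
  · exact hni t (Or.inl ⟨h1, htR⟩) (Or.inl ⟨h2, htR⟩)

lemma ctr_inj (hx₀ : x₀ ∈ R) {T₁ T₂ : Set X} (hok₁ : R ⊆ T₁ ∨ R ∩ T₁ = ∅)
    (hok₂ : R ⊆ T₂ ∨ R ∩ T₂ = ∅)
    (h : ctr R x₀ T₁ = ctr R x₀ T₂) : T₁ = T₂ :=
  subset_antisymm (ctr_pull_sub hx₀ hok₁ h.le) (ctr_pull_sub hx₀ hok₂ h.ge)

lemma ctr_union (hx₀ : x₀ ∈ R) {S H : Set X} (hd : S ∩ H = ∅)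
    (hok : R ⊆ S ∨ R ⊆ H ∨ R ∩ (S ∪ H) = ∅) :
    ctr R x₀ (S ∪ H) = ctr R x₀ S ∪ ctr R x₀ H := by
  have hcase : ∀ (S H : Set X), S ∩ H = ∅ → R ⊆ S →
      ctr R x₀ (S ∪ H) = ctr R x₀ S ∪ ctr R x₀ H := by
    intro S H hd hR
    have hdH : R ∩ H = ∅ := by
      have : R ∩ H ⊆ S ∩ H := Set.inter_subset_inter_left H hR
      rw [hd] at this; exact Set.subset_empty_iff.mp this
    rw [ctr_of_subset (hR.trans Set.subset_union_left), ctr_of_subset hR,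
      ctr_of_disj hx₀ hdH]
    rw [Set.union_diff_distrib]
    have : H \ R = H := by
      ext y
      constructor
      · exact fun hy => hy.1
      · intro hy
        exact ⟨hy, fun hyR => absurd (Set.mem_inter hyR hy) (by rw [hdH]; exact id)⟩
    rw [this]
    ext y; simp only [Set.mem_union, Set.mem_singleton_iff]; tauto
  rcases hok with h | h | h
  · exact hcase S H hd h
  · rw [Set.union_comm S H, Set.union_comm (ctr R x₀ S)]
    exact hcase H S (by rw [Set.inter_comm]; exact hd) h
  · have h1 : R ∩ S = ∅ := by
      have : R ∩ S ⊆ R ∩ (S ∪ H) := Set.inter_subset_inter_right R Set.subset_union_left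
      rw [h] at this; exact Set.subset_empty_iff.mp this
    have h2 : R ∩ H = ∅ := by
      have : R ∩ H ⊆ R ∩ (S ∪ H) := Set.inter_subset_inter_right R Set.subset_union_right
      rw [h] at this; exact Set.subset_empty_iff.mp this
    rw [ctr_of_disj hx₀ h, ctr_of_disj hx₀ h1, ctr_of_disj hx₀ h2]

end ctr

lemma laminar_big_card (k : ℕ) : ∀ (𝒯 : Set (Set X)) (A : Set X), 𝒯.ncard ≤ k →
    (∀ T ∈ 𝒯, T ⊆ A ∧ 2 ≤ T.ncard) →
    (∀ T₁ ∈ 𝒯, ∀ T₂ ∈ 𝒯, T₁ ⊆ T₂ ∨ T₂ ⊆ T₁ ∨ T₁ ∩ T₂ = ∅) →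
    𝒯.ncard ≤ A.ncard - 1 := by
  induction k with
  | zero => intro 𝒯 A hk _ _; omega
  | succ k ih =>
    intro 𝒯 A hk h1 hF1
    rcases 𝒯.eq_empty_or_nonempty with rfl | h𝒯
    · simp
    obtain ⟨S₀, hS₀, hmin⟩ := Set.exists_min_image 𝒯 Set.ncard (Set.toFinite 𝒯) h𝒯
    have hok : ∀ T ∈ 𝒯, S₀ ⊆ T ∨ S₀ ∩ T = ∅ := by
      intro T hT
      by_cases hTe : T = S₀
      · exact Or.inl (le_of_eq hTe.symm)
      rcases hF1 T hT S₀ hS₀ with h | h | h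
      · exact absurd (Set.eq_of_subset_of_ncard_le h (hmin T hT) (Set.toFinite _)) hTe
      · exact Or.inl h
      · exact Or.inr (by rw [Set.inter_comm]; exact h)
    have hS₀ne : S₀.Nonempty := by
      rw [← Set.ncard_pos (Set.toFinite _)]
      have := (h1 S₀ hS₀).2; omega
    obtain ⟨x₀, hx₀⟩ := hS₀ne
    set 𝒯' : Set (Set X) := ctr S₀ x₀ '' (𝒯 \ {S₀}) with h𝒯'
    set A' : Set X := insert x₀ (A \ S₀) with hA'
    have hokd : ∀ T ∈ 𝒯 \ {S₀}, S₀ ⊆ T ∨ S₀ ∩ T = ∅ := fun T hT => hok T hT.1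
    have hinj : Set.InjOn (ctr S₀ x₀) (𝒯 \ {S₀}) :=
      fun T₁ hT₁ T₂ hT₂ he => ctr_inj hx₀ (hokd T₁ hT₁) (hokd T₂ hT₂) he
    have hcard' : 𝒯'.ncard = 𝒯.ncard - 1 := by
      rw [h𝒯', Set.ncard_image_of_injOn hinj]
      have hs : ({S₀} : Set (Set X)) ⊆ 𝒯 := by simp [hS₀]
      rw [Set.ncard_diff hs (Set.toFinite _), Set.ncard_singleton]
    have hTpos : 1 ≤ 𝒯.ncard := (Set.ncard_pos (Set.toFinite _)).mpr h𝒯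
    have h1' : ∀ T' ∈ 𝒯', T' ⊆ A' ∧ 2 ≤ T'.ncard := by
      rintro T' ⟨T, hT, rfl⟩
      constructor
      · exact ctr_subset_ground (h1 T hT.1).1
      · rcases hokd T hT with hsub | hdis
        · have hss : S₀ ⊂ T := hsub.ssubset_of_ne (fun he => hT.2 he.symm)
          obtain ⟨t, ht1, ht2⟩ := Set.exists_of_ssubset hss
          have : 1 < (ctr S₀ x₀ T).ncard := by
            rw [Set.one_lt_ncard_iff (Set.toFinite _)]
            refine ⟨t, x₀, Or.inl ⟨ht1, ht2⟩, Or.inr ⟨rfl, hsub⟩, ?_⟩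
            intro he; exact ht2 (he ▸ hx₀)
          omega
        · rw [ctr_of_disj hx₀ hdis]
          exact (h1 T hT.1).2
    have hF1' : ∀ T₁ ∈ 𝒯', ∀ T₂ ∈ 𝒯', T₁ ⊆ T₂ ∨ T₂ ⊆ T₁ ∨ T₁ ∩ T₂ = ∅ := by
      rintro T₁' ⟨T₁, h₁, rfl⟩ T₂' ⟨T₂, h₂, rfl⟩
      rcases hF1 T₁ h₁.1 T₂ h₂.1 with h | h | h
      · exact Or.inl (ctr_mono h)
      · exact Or.inr (Or.inl (ctr_mono h))
      · exact Or.inr (Or.inr (ctr_disj hx₀ h))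
    have hIH : 𝒯'.ncard ≤ A'.ncard - 1 := ih 𝒯' A' (by omega) h1' hF1'
    have hx₀A : x₀ ∉ A \ S₀ := fun h => h.2 hx₀
    have hA'card : A'.ncard = (A \ S₀).ncard + 1 := by
      rw [hA', Set.ncard_insert_of_notMem hx₀A (Set.toFinite _)]
    have hdiffcard : (A \ S₀).ncard = A.ncard - S₀.ncard := Set.ncard_diff (h1 S₀ hS₀).1 (Set.toFinite _)
    have hle : S₀.ncard ≤ A.ncard := Set.ncard_le_ncard (h1 S₀ hS₀).1 (Set.toFinite _)
    have h2S := (h1 S₀ hS₀).2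
    omega

lemma partB_card (k : ℕ) : ∀ (ℬ : Set (Set X × Set X)) (A : Set X), A.ncard ≤ k →
    (∀ p ∈ ℬ, p.1.Nonempty ∧ p.2.Nonempty ∧ p.1 ∩ p.2 = ∅ ∧ p.1 ∪ p.2 ⊆ A) →
    (∀ p ∈ ℬ, ∀ q ∈ ℬ, p.2 = q.2 → p ≠ q → (p.1 ⊆ q.1 ∨ q.1 ⊆ p.1 ∨ p.1 ∩ q.1 = ∅)) →
    (∀ p ∈ ℬ, ∀ q ∈ ℬ, ∀ r ∈ ℬ, p.2 = q.2 → q.2 = r.2 → p.1 ∩ q.1 = ∅ →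
      ¬(p.1 ∪ q.1 ⊆ r.1 ∨ (p.1 ∪ q.1) ∩ r.1 = ∅)) →
    (∀ p ∈ ℬ, ∀ q ∈ ℬ, p.2 ≠ q.2 →
      ((p.1 ∪ p.2) ∩ (q.1 ∪ q.2) = ∅ ∨ p.1 ∪ p.2 ⊆ q.1 ∨ p.1 ∪ p.2 ⊆ q.2 ∨
       q.1 ∪ q.2 ⊆ p.1 ∨ q.1 ∪ q.2 ⊆ p.2)) →
    ℬ.ncard ≤ A.ncard - 1 := by
  have hnielt : ∀ (x : X) (S T : Set X), x ∈ S → x ∈ T → S ∩ T = ∅ → False := by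
    intro x S T h1 h2 h3
    have : x ∈ S ∩ T := ⟨h1, h2⟩
    rw [h3] at this; exact this
  induction k with
  | zero =>
    intro ℬ A hk h0 _ _ _
    rcases ℬ.eq_empty_or_nonempty with rfl | ⟨p, hp⟩
    · simp
    obtain ⟨hp1, _, _, hpA⟩ := h0 p hp
    obtain ⟨x, hx⟩ := hp1
    have : 0 < A.ncard := (Set.ncard_pos (Set.toFinite _)).mpr ⟨x, hpA (Or.inl hx)⟩
    omega
  | succ k ih =>
    intro ℬ A hk h0 hF1 hF2 hF3
    rcases ℬ.eq_empty_or_nonempty with rfl | hℬ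
    · simp
    set Reg : Set X × Set X → Set X :=
      fun p => (⋃₀ (Prod.fst '' {q ∈ ℬ | q.2 = p.2})) ∪ p.2 with hRegDef
    obtain ⟨p₀, hp₀, hminR⟩ := Set.exists_min_image ℬ (fun p => (Reg p).ncard)
      (Set.toFinite _) hℬ
    set H₀ : Set X := p₀.2 with hH₀def
    set C : Set (Set X × Set X) := {q ∈ ℬ | q.2 = H₀} with hCdef
    set 𝒞 : Set (Set X) := Prod.fst '' C with h𝒞def
    set U : Set X := ⋃₀ 𝒞 with hUdef
    set R : Set X := U ∪ H₀ with hRdef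
    have hRp₀ : Reg p₀ = R := rfl
    have hp₀C : p₀ ∈ C := ⟨hp₀, rfl⟩
    have hCsub : C ⊆ ℬ := fun q hq => hq.1
    have h0p₀ := h0 p₀ hp₀
    have hH₀ne : H₀.Nonempty := h0p₀.2.1
    have hmemU : ∀ q ∈ C, q.1 ⊆ U := by
      intro q hq x hx
      exact ⟨q.1, ⟨q, hq, rfl⟩, hx⟩
    have hUH : U ∩ H₀ = ∅ := by
      ext x
      simp only [Set.mem_inter_iff, Set.mem_empty_iff_false, iff_false]
      rintro ⟨⟨S, ⟨q, hq, rfl⟩, hxS⟩, hxH⟩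
      exact hnielt x q.1 q.2 hxS (hq.2 ▸ hxH) (h0 q hq.1).2.2.1
    have hH₀R : H₀ ⊆ R := Set.subset_union_right
    have hUR : U ⊆ R := Set.subset_union_left
    have hRA : R ⊆ A := by
      apply Set.union_subset
      · apply Set.sUnion_subset
        rintro S ⟨q, hq, rfl⟩
        exact (Set.subset_union_left).trans (h0 q hq.1).2.2.2
      · exact (Set.subset_union_right).trans h0p₀.2.2.2
    have hUne : U.Nonempty := by
      obtain ⟨x, hx⟩ := h0p₀.1
      exact ⟨x, hmemU p₀ hp₀C hx⟩
    have claimA : ∀ q ∈ ℬ, q.2 ≠ H₀ → ∀ p ∈ C, ¬(q.1 ∪ q.2 ⊆ p.1) := by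
      intro q hq hqne p hpC hsub
      have hKne : q.2.Nonempty := (h0 q hq).2.1
      have hclass : ∀ q' ∈ ℬ, q'.2 = q.2 → q'.1 ∪ q'.2 ⊆ p.1 := by
        intro q' hq' he
        have hne' : q'.2 ≠ p.2 := by rw [he, hpC.2]; exact hqne
        obtain ⟨y, hy⟩ := hKne
        have hyp1 : y ∈ p.1 := hsub (Or.inr hy)
        have hyq' : y ∈ q'.2 := he ▸ hy
        rcases hF3 q' hq' p (hCsub hpC) hne' with h | h | h | h | h
        · exact absurd h (by
            intro hcon
            exact hnielt y _ _ (Or.inr hyq') (Or.inl hyp1) hcon)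
        · exact h
        · exact absurd (hnielt y p.1 p.2 hyp1 (h (Or.inr hyq'))
            (h0 p (hCsub hpC)).2.2.1) id
        · exact absurd (hnielt y q'.1 q'.2 (h (Or.inl hyp1)) hyq'
            (h0 q' hq').2.2.1) id
        · exfalso
          obtain ⟨z, hz⟩ := (h0 p (hCsub hpC)).2.1
          have hzq2 : z ∈ q'.2 := h (Or.inr hz)
          have hzp1 : z ∈ p.1 := hsub (Or.inr (he ▸ hzq2))
          exact hnielt z p.1 p.2 hzp1 hz (h0 p (hCsub hpC)).2.2.1
      have hRegq : Reg q ⊆ p.1 := by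
        apply Set.union_subset
        · apply Set.sUnion_subset
          rintro S ⟨q', hq', rfl⟩
          exact (Set.subset_union_left).trans (hclass q' hq'.1 hq'.2)
        · exact (Set.subset_union_right).trans (hclass q hq rfl)
      have hstrict : p.1 ⊂ R := by
        refine ⟨(hmemU p hpC).trans hUR, fun hcon => ?_⟩
        obtain ⟨y, hy⟩ := hH₀ne
        exact hnielt y p.1 p.2 (hcon (hH₀R hy)) (hpC.2.symm ▸ hy)
          (h0 p (hCsub hpC)).2.2.1
      have h1 : (Reg q).ncard < (Reg p₀).ncard := by
        rw [hRp₀]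
        exact lt_of_le_of_lt (Set.ncard_le_ncard hRegq (Set.toFinite _))
          (Set.ncard_lt_ncard hstrict (Set.toFinite _))
      have h2 := hminR q hq
      omega
    have claimB : ∀ q ∈ ℬ, q.2 ≠ H₀ → ¬(q.1 ∪ q.2 ⊆ H₀) := by
      intro q hq hqne hsub
      have hKne : q.2.Nonempty := (h0 q hq).2.1
      have hclass : ∀ q' ∈ ℬ, q'.2 = q.2 → q'.1 ∪ q'.2 ⊆ H₀ := by
        intro q' hq' he
        have hne' : q'.2 ≠ p₀.2 := by rw [he]; exact hqne
        obtain ⟨y, hy⟩ := hKne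
        have hyH : y ∈ H₀ := hsub (Or.inr hy)
        have hyq' : y ∈ q'.2 := he ▸ hy
        rcases hF3 q' hq' p₀ hp₀ hne' with h | h | h | h | h
        · exact absurd (hnielt y _ _ (Or.inr hyq') (Or.inr hyH) h) id
        · exact absurd (hnielt y p₀.1 p₀.2 (h (Or.inr hyq')) hyH h0p₀.2.2.1) id
        · exact h
        · exact absurd (hnielt y q'.1 q'.2 (h (Or.inr hyH)) hyq' (h0 q' hq').2.2.1) id
        · exfalso
          obtain ⟨z, hz⟩ := h0p₀.1
          have hzq2 : z ∈ q'.2 := h (Or.inl hz)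
          have hzH : z ∈ H₀ := hsub (Or.inr (he ▸ hzq2))
          exact hnielt z p₀.1 p₀.2 hz hzH h0p₀.2.2.1
      have hRegq : Reg q ⊆ H₀ := by
        apply Set.union_subset
        · apply Set.sUnion_subset
          rintro S ⟨q', hq', rfl⟩
          exact (Set.subset_union_left).trans (hclass q' hq'.1 hq'.2)
        · exact (Set.subset_union_right).trans (hclass q hq rfl)
      have hstrict : H₀ ⊂ R := by
        refine ⟨hH₀R, fun hcon => ?_⟩
        obtain ⟨y, hy⟩ := hUne
        exact hnielt y U H₀ hy (hcon (hUR hy)) hUH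
      have h1 : (Reg q).ncard < (Reg p₀).ncard := by
        rw [hRp₀]
        exact lt_of_le_of_lt (Set.ncard_le_ncard hRegq (Set.toFinite _))
          (Set.ncard_lt_ncard hstrict (Set.toFinite _))
      have h2 := hminR q hq
      omega
    have claimC : ∀ q ∈ ℬ, q.2 ≠ H₀ → (R ⊆ q.1 ∨ R ⊆ q.2 ∨ R ∩ (q.1 ∪ q.2) = ∅) := by
      intro q hq hqne
      have hopts : ∀ p ∈ C, (p.1 ∪ p.2) ∩ (q.1 ∪ q.2) = ∅ ∨
          p.1 ∪ p.2 ⊆ q.1 ∨ p.1 ∪ p.2 ⊆ q.2 := by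
        intro p hpC
        have hne' : p.2 ≠ q.2 := by rw [hpC.2]; exact fun h => hqne h.symm
        rcases hF3 p (hCsub hpC) q hq hne' with h | h | h | h | h
        · exact Or.inl h
        · exact Or.inr (Or.inl h)
        · exact Or.inr (Or.inr h)
        · exact absurd h (claimA q hq hqne p hpC)
        · exact absurd (hpC.2 ▸ h) (claimB q hq hqne)
      have hRsup : R ⊆ ⋃₀ ((fun p => p.1 ∪ p.2) '' C) := by
        apply Set.union_subset
        · apply Set.sUnion_subset
          rintro S ⟨p, hpC, rfl⟩
          intro x hx
          exact ⟨p.1 ∪ p.2, ⟨p, hpC, rfl⟩, Or.inl hx⟩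
        · intro x hx
          exact ⟨p₀.1 ∪ p₀.2, ⟨p₀, hp₀C, rfl⟩, Or.inr hx⟩
      by_cases hc1 : ∃ p ∈ C, p.1 ∪ p.2 ⊆ q.1
      · obtain ⟨pw, hpw, hpwsub⟩ := hc1
        have hHq1 : H₀ ⊆ q.1 := by
          intro y hy
          exact hpwsub (Or.inr (hpw.2.symm ▸ hy))
        left
        refine hRsup.trans (Set.sUnion_subset ?_)
        rintro S ⟨p, hpC, rfl⟩
        rcases hopts p hpC with h | h | h
        · exfalso
          obtain ⟨y, hy⟩ := hH₀ne
          exact hnielt y (p.1 ∪ p.2) (q.1 ∪ q.2)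
            (Or.inr (hpC.2.symm ▸ hy)) (Or.inl (hHq1 hy)) h
        · exact h
        · exfalso
          obtain ⟨y, hy⟩ := hH₀ne
          exact hnielt y q.1 q.2 (hHq1 hy) (h (Or.inr (hpC.2.symm ▸ hy)))
            (h0 q hq).2.2.1
      by_cases hc2 : ∃ p ∈ C, p.1 ∪ p.2 ⊆ q.2
      · obtain ⟨pw, hpw, hpwsub⟩ := hc2
        have hHq2 : H₀ ⊆ q.2 := by
          intro y hy
          exact hpwsub (Or.inr (hpw.2.symm ▸ hy))
        right; left
        refine hRsup.trans (Set.sUnion_subset ?_)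
        rintro S ⟨p, hpC, rfl⟩
        rcases hopts p hpC with h | h | h
        · exfalso
          obtain ⟨y, hy⟩ := hH₀ne
          exact hnielt y (p.1 ∪ p.2) (q.1 ∪ q.2)
            (Or.inr (hpC.2.symm ▸ hy)) (Or.inr (hHq2 hy)) h
        · exfalso
          obtain ⟨y, hy⟩ := hH₀ne
          exact hnielt y q.1 q.2 (h (Or.inr (hpC.2.symm ▸ hy))) (hHq2 hy)
            (h0 q hq).2.2.1
        · exact h
      · right; right
        push_neg at hc1 hc2
        ext x
        simp only [Set.mem_inter_iff, Set.mem_empty_iff_false, iff_false]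
        rintro ⟨hxR, hxq⟩
        obtain ⟨S, ⟨p, hpC, rfl⟩, hxS⟩ := hRsup hxR
        rcases hopts p hpC with h | h | h
        · exact hnielt x _ _ hxS hxq h
        · exact hc1 p hpC h
        · exact hc2 p hpC h
    -- cardinality of the minimal class
    have hCcard : C.ncard ≤ U.ncard := by
      have hinjC : Set.InjOn Prod.fst C := by
        intro q₁ h₁ q₂ h₂ he
        exact Prod.ext he (h₁.2.trans h₂.2.symm)
      have h𝒞card : 𝒞.ncard = C.ncard := Set.ncard_image_of_injOn hinjC
      have := two_chain_card 𝒞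
        (by rintro T ⟨q, hq, rfl⟩; exact (h0 q hq.1).1)
        (by
          rintro T₁ ⟨q₁, h₁, rfl⟩ T₂ ⟨q₂, h₂, rfl⟩
          by_cases he : q₁ = q₂
          · exact Or.inl (he ▸ subset_rfl)
          · exact hF1 q₁ h₁.1 q₂ h₂.1 (h₁.2.trans h₂.2.symm) he)
        (by
          rintro T₁ ⟨q₁, h₁, rfl⟩ T₂ ⟨q₂, h₂, rfl⟩ T₃ ⟨q₃, h₃, rfl⟩ hd
          exact hF2 q₁ h₁.1 q₂ h₂.1 q₃ h₃.1 (h₁.2.trans h₂.2.symm)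
            (h₂.2.trans h₃.2.symm) hd)
      rw [h𝒞card] at this
      exact this
    -- contraction
    obtain ⟨x₀, hx₀H⟩ := hH₀ne
    have hx₀R : x₀ ∈ R := hH₀R hx₀H
    set A' : Set X := insert x₀ (A \ R) with hA'def
    set f : Set X × Set X → Set X × Set X :=
      fun q => (ctr R x₀ q.1, ctr R x₀ q.2) with hfdef
    set ℬ' : Set (Set X × Set X) := f '' (ℬ \ C) with hℬ'def
    have hmemBC : ∀ q ∈ ℬ \ C, q ∈ ℬ ∧ q.2 ≠ H₀ := by
      intro q hq
      refine ⟨hq.1, fun he => hq.2 ⟨hq.1, he⟩⟩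
    have hok1 : ∀ q ∈ ℬ \ C, R ⊆ q.1 ∨ R ∩ q.1 = ∅ := by
      intro q hq
      obtain ⟨hqB, hqne⟩ := hmemBC q hq
      rcases claimC q hqB hqne with h | h | h
      · exact Or.inl h
      · right
        ext x
        simp only [Set.mem_inter_iff, Set.mem_empty_iff_false, iff_false]
        rintro ⟨hxR, hxq⟩
        exact hnielt x q.1 q.2 hxq (h hxR) (h0 q hqB).2.2.1
      · right
        ext x
        simp only [Set.mem_inter_iff, Set.mem_empty_iff_false, iff_false]
        rintro ⟨hxR, hxq⟩
        exact hnielt x R (q.1 ∪ q.2) hxR (Or.inl hxq) h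
    have hok2 : ∀ q ∈ ℬ \ C, R ⊆ q.2 ∨ R ∩ q.2 = ∅ := by
      intro q hq
      obtain ⟨hqB, hqne⟩ := hmemBC q hq
      rcases claimC q hqB hqne with h | h | h
      · right
        ext x
        simp only [Set.mem_inter_iff, Set.mem_empty_iff_false, iff_false]
        rintro ⟨hxR, hxq⟩
        exact hnielt x q.1 q.2 (h hxR) hxq (h0 q hqB).2.2.1
      · exact Or.inl h
      · right
        ext x
        simp only [Set.mem_inter_iff, Set.mem_empty_iff_false, iff_false]
        rintro ⟨hxR, hxq⟩
        exact hnielt x R (q.1 ∪ q.2) hxR (Or.inr hxq) h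
    have hoku : ∀ q ∈ ℬ \ C, R ⊆ q.1 ∨ R ⊆ q.2 ∨ R ∩ (q.1 ∪ q.2) = ∅ := by
      intro q hq
      obtain ⟨hqB, hqne⟩ := hmemBC q hq
      exact claimC q hqB hqne
    have hinjf : Set.InjOn f (ℬ \ C) := by
      intro q₁ h₁ q₂ h₂ he
      have he1 : ctr R x₀ q₁.1 = ctr R x₀ q₂.1 := congrArg Prod.fst he
      have he2 : ctr R x₀ q₁.2 = ctr R x₀ q₂.2 := congrArg Prod.snd he
      exact Prod.ext (ctr_inj hx₀R (hok1 q₁ h₁) (hok1 q₂ h₂) he1)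
        (ctr_inj hx₀R (hok2 q₁ h₁) (hok2 q₂ h₂) he2)
    have hB'card : ℬ'.ncard = (ℬ \ C).ncard := Set.ncard_image_of_injOn hinjf
    have hBsplit : (ℬ \ C).ncard + C.ncard = ℬ.ncard :=
      Set.ncard_diff_add_ncard_of_subset hCsub (Set.toFinite _)
    -- hypotheses for the contracted system
    have hsnd : ∀ q₁ ∈ ℬ \ C, ∀ q₂ ∈ ℬ \ C,
        ctr R x₀ q₁.2 = ctr R x₀ q₂.2 → q₁.2 = q₂.2 :=
      fun q₁ h₁ q₂ h₂ he => ctr_inj hx₀R (hok2 q₁ h₁) (hok2 q₂ h₂) he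
    have h0' : ∀ p ∈ ℬ', p.1.Nonempty ∧ p.2.Nonempty ∧ p.1 ∩ p.2 = ∅ ∧
        p.1 ∪ p.2 ⊆ A' := by
      rintro p ⟨q, hq, rfl⟩
      obtain ⟨hqB, _⟩ := hmemBC q hq
      obtain ⟨hq1, hq2, hq12, hqA⟩ := h0 q hqB
      refine ⟨ctr_nonempty hx₀R (hok1 q hq) hq1,
        ctr_nonempty hx₀R (hok2 q hq) hq2,
        ctr_disj hx₀R hq12, ?_⟩
      apply Set.union_subset
      · exact ctr_subset_ground ((Set.subset_union_left).trans hqA)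
      · exact ctr_subset_ground ((Set.subset_union_right).trans hqA)
    have hF1' : ∀ p ∈ ℬ', ∀ q ∈ ℬ', p.2 = q.2 → p ≠ q →
        (p.1 ⊆ q.1 ∨ q.1 ⊆ p.1 ∨ p.1 ∩ q.1 = ∅) := by
      rintro p ⟨q₁, h₁, rfl⟩ q ⟨q₂, h₂, rfl⟩ hes hne
      have hsnd12 : q₁.2 = q₂.2 := hsnd q₁ h₁ q₂ h₂ hes
      have hne12 : q₁ ≠ q₂ := fun h => hne (h ▸ rfl)
      rcases hF1 q₁ h₁.1 q₂ h₂.1 hsnd12 hne12 with h | h | h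
      · exact Or.inl (ctr_mono h)
      · exact Or.inr (Or.inl (ctr_mono h))
      · exact Or.inr (Or.inr (ctr_disj hx₀R h))
    have hF2' : ∀ p ∈ ℬ', ∀ q ∈ ℬ', ∀ r ∈ ℬ', p.2 = q.2 → q.2 = r.2 →
        p.1 ∩ q.1 = ∅ → ¬(p.1 ∪ q.1 ⊆ r.1 ∨ (p.1 ∪ q.1) ∩ r.1 = ∅) := by
      rintro p ⟨q₁, h₁, rfl⟩ q ⟨q₂, h₂, rfl⟩ r ⟨q₃, h₃, rfl⟩ hs12 hs23 hd hviol
      have he12 : q₁.2 = q₂.2 := hsnd q₁ h₁ q₂ h₂ hs12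
      have he23 : q₂.2 = q₃.2 := hsnd q₂ h₂ q₃ h₃ hs23
      have hd' : q₁.1 ∩ q₂.1 = ∅ :=
        ctr_pull_disj hx₀R (hok1 q₁ h₁) (hok1 q₂ h₂) hd
      apply hF2 q₁ h₁.1 q₂ h₂.1 q₃ h₃.1 he12 he23 hd'
      rcases hviol with h | h
      · left
        apply Set.union_subset
        · exact ctr_pull_sub hx₀R (hok1 q₁ h₁)
            ((Set.subset_union_left).trans h)
        · exact ctr_pull_sub hx₀R (hok1 q₂ h₂)
            ((Set.subset_union_right).trans h)
      · right
        have hd1 : q₁.1 ∩ q₃.1 = ∅ := by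
          apply ctr_pull_disj hx₀R (hok1 q₁ h₁) (hok1 q₃ h₃)
          ext x
          simp only [Set.mem_inter_iff, Set.mem_empty_iff_false, iff_false]
          rintro ⟨hx1, hx3⟩
          exact hnielt x _ _ (Or.inl hx1) hx3 h
        have hd2 : q₂.1 ∩ q₃.1 = ∅ := by
          apply ctr_pull_disj hx₀R (hok1 q₂ h₂) (hok1 q₃ h₃)
          ext x
          simp only [Set.mem_inter_iff, Set.mem_empty_iff_false, iff_false]
          rintro ⟨hx2, hx3⟩
          exact hnielt x _ _ (Or.inr hx2) hx3 h
        ext x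
        simp only [Set.mem_inter_iff, Set.mem_empty_iff_false, iff_false]
        rintro ⟨hx12, hx3⟩
        rcases hx12 with hx1 | hx2
        · exact hnielt x q₁.1 q₃.1 hx1 hx3 hd1
        · exact hnielt x q₂.1 q₃.1 hx2 hx3 hd2
    have hF3' : ∀ p ∈ ℬ', ∀ q ∈ ℬ', p.2 ≠ q.2 →
        ((p.1 ∪ p.2) ∩ (q.1 ∪ q.2) = ∅ ∨ p.1 ∪ p.2 ⊆ q.1 ∨ p.1 ∪ p.2 ⊆ q.2 ∨
         q.1 ∪ q.2 ⊆ p.1 ∨ q.1 ∪ q.2 ⊆ p.2) := by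
      rintro p ⟨q₁, h₁, rfl⟩ q ⟨q₂, h₂, rfl⟩ hne
      have hne12 : q₁.2 ≠ q₂.2 := fun h => hne (congrArg (ctr R x₀) h)
      have hu1 : ctr R x₀ (q₁.1 ∪ q₁.2) = ctr R x₀ q₁.1 ∪ ctr R x₀ q₁.2 :=
        ctr_union hx₀R (h0 q₁ h₁.1).2.2.1 (hoku q₁ h₁)
      have hu2 : ctr R x₀ (q₂.1 ∪ q₂.2) = ctr R x₀ q₂.1 ∪ ctr R x₀ q₂.2 :=
        ctr_union hx₀R (h0 q₂ h₂.1).2.2.1 (hoku q₂ h₂)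
      rcases hF3 q₁ h₁.1 q₂ h₂.1 hne12 with h | h | h | h | h
      · left; rw [← hu1, ← hu2]; exact ctr_disj hx₀R h
      · right; left; rw [← hu1]; exact ctr_mono h
      · right; right; left; rw [← hu1]; exact ctr_mono h
      · right; right; right; left; rw [← hu2]; exact ctr_mono h
      · right; right; right; right; rw [← hu2]; exact ctr_mono h
    -- cardinalities of the new ground set
    have hx₀A : x₀ ∉ A \ R := fun h => h.2 hx₀R
    have hA'card : A'.ncard = (A \ R).ncard + 1 := by
      rw [hA'def, Set.ncard_insert_of_notMem hx₀A (Set.toFinite _)]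
    have hARcard : (A \ R).ncard = A.ncard - R.ncard :=
      Set.ncard_diff hRA (Set.toFinite _)
    have hRle : R.ncard ≤ A.ncard := Set.ncard_le_ncard hRA (Set.toFinite _)
    have hRcard : R.ncard = U.ncard + H₀.ncard := by
      rw [hRdef]
      exact Set.ncard_union_eq (Set.disjoint_iff_inter_eq_empty.mpr hUH)
        (Set.toFinite _) (Set.toFinite _)
    have hH₀pos : 0 < H₀.ncard := (Set.ncard_pos (Set.toFinite _)).mpr ⟨x₀, hx₀H⟩
    have hUpos : 0 < U.ncard := (Set.ncard_pos (Set.toFinite _)).mpr hUne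
    have hA'le : A'.ncard ≤ k := by omega
    have hIH : ℬ'.ncard ≤ A'.ncard - 1 := ih ℬ' A' hA'le h0' hF1' hF2' hF3'
    have hCpos : 0 < C.ncard := (Set.ncard_pos (Set.toFinite _)).mpr ⟨p₀, hp₀C⟩
    omega

lemma singleton_family_card (𝒯 : Set (Set X)) (h : ∀ T ∈ 𝒯, ∃ x, T = {x}) :
    𝒯.ncard ≤ Fintype.card X := by
  have hsub : 𝒯 ⊆ (fun x : X => ({x} : Set X)) '' Set.univ := by
    intro T hT
    obtain ⟨x, rfl⟩ := h T hT
    exact ⟨x, Set.mem_univ x, rfl⟩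
  calc 𝒯.ncard ≤ ((fun x : X => ({x} : Set X)) '' Set.univ).ncard :=
        Set.ncard_le_ncard hsub (Set.toFinite _)
    _ ≤ (Set.univ : Set X).ncard := Set.ncard_image_le (Set.toFinite _)
    _ = Fintype.card X := by rw [Set.ncard_univ, Nat.card_eq_fintype_card]


end Aux

/-- If `𝒮` is a 1-nested compatible set pair system on a set `X` with `|X| = n`,
then `|𝒮| ≤ 3n − 2`. -/
theorem card_le_three_n_sub_two {X : Type*} [Fintype X] [Nonempty X]
    (𝒮 : Set (Set X × Set X)) (h : OneNestedCompatible 𝒮) :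
    𝒮.ncard ≤ 3 * Fintype.card X - 2 := by
  obtain ⟨hSPS, _hNC1, _hNC2, _hNC3, hNC4, hNC5⟩ := h
  set n := Fintype.card X with hn
  have hn1 : 1 ≤ n := Fintype.card_pos
  have hnielt : ∀ (x : X) (S T : Set X), x ∈ S → x ∈ T → S ∩ T = ∅ → False := by
    intro x S T h1 h2 h3
    have : x ∈ S ∩ T := ⟨h1, h2⟩
    rw [h3] at this; exact this
  have huniv : (Set.univ : Set X).ncard = n := by
    rw [Set.ncard_univ, Nat.card_eq_fintype_card]
  set 𝒮₀ : Set (Set X × Set X) := {p ∈ 𝒮 | p.2 = ∅} with h𝒮₀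
  set ℬ : Set (Set X × Set X) := {p ∈ 𝒮 | p.2 ≠ ∅} with hℬ
  have hcover : 𝒮 = 𝒮₀ ∪ ℬ := by
    ext p
    constructor
    · intro hp
      by_cases he : p.2 = ∅
      · exact Or.inl ⟨hp, he⟩
      · exact Or.inr ⟨hp, he⟩
    · rintro (⟨hp, _⟩ | ⟨hp, _⟩) <;> exact hp
  -- Part A : the pairs with empty second component
  have hA : 𝒮₀.ncard ≤ n + (n - 1) := by
    set 𝒯 : Set (Set X) := Prod.fst '' 𝒮₀ with h𝒯
    have hinj : Set.InjOn Prod.fst 𝒮₀ := by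
      intro p hp q hq he
      exact Prod.ext he (hp.2.trans hq.2.symm)
    have h𝒯card : 𝒯.ncard = 𝒮₀.ncard := Set.ncard_image_of_injOn hinj
    have h𝒯ne : ∀ T ∈ 𝒯, T.Nonempty := by
      rintro T ⟨p, hp, rfl⟩
      exact Set.nonempty_iff_ne_empty.mpr (hSPS p hp.1).1
    have hlam : ∀ T₁ ∈ 𝒯, ∀ T₂ ∈ 𝒯, T₁ ⊆ T₂ ∨ T₂ ⊆ T₁ ∨ T₁ ∩ T₂ = ∅ := by
      rintro T₁ ⟨p, hp, rfl⟩ T₂ ⟨q, hq, rfl⟩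
      by_cases hpq : p = q
      · exact Or.inl (hpq ▸ subset_rfl)
      rcases hNC4 p hp.1 q hq.1 hpq with ⟨h1, _⟩ | ⟨_, h1, _⟩ | ⟨_, _, h1, _⟩ | ⟨_, _, _, h1⟩
      · obtain ⟨_, ha | hb | hc⟩ := h1
        · exact Or.inl ((Set.subset_union_left).trans ha)
        · left
          intro x hx
          have : x ∈ q.2 := hb (Or.inl hx)
          rw [hq.2] at this
          exact absurd this (Set.notMem_empty x)
        · exact Or.inl hc.1.subset
      · obtain ⟨_, ha | hb | hc⟩ := h1
        · exact Or.inr (Or.inl ((Set.subset_union_left).trans ha))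
        · right; left
          intro x hx
          have : x ∈ p.2 := hb (Or.inl hx)
          rw [hp.2] at this
          exact absurd this (Set.notMem_empty x)
        · exact Or.inr (Or.inl hc.1.subset)
      · right; right
        ext x
        simp only [Set.mem_inter_iff, Set.mem_empty_iff_false, iff_false]
        rintro ⟨hx1, hx2⟩
        exact hnielt x _ _ (Or.inl hx1) (Or.inl hx2) h1
      · exact absurd h1.2.2 (by rw [hp.2]; exact fun hh => hh rfl)
    set 𝒯s : Set (Set X) := {T ∈ 𝒯 | T.ncard ≤ 1} with h𝒯s
    set 𝒯b : Set (Set X) := {T ∈ 𝒯 | 2 ≤ T.ncard} with h𝒯b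
    have hTcover : 𝒯 = 𝒯s ∪ 𝒯b := by
      ext T
      constructor
      · intro hT
        by_cases hc : T.ncard ≤ 1
        · exact Or.inl ⟨hT, hc⟩
        · exact Or.inr ⟨hT, by omega⟩
      · rintro (⟨hT, _⟩ | ⟨hT, _⟩) <;> exact hT
    have hs : 𝒯s.ncard ≤ n := by
      apply singleton_family_card
      rintro T ⟨hT, hc⟩
      have hpos : 0 < T.ncard := (Set.ncard_pos (Set.toFinite _)).mpr (h𝒯ne T hT)
      rw [← Set.ncard_eq_one]
      omega
    have hb : 𝒯b.ncard ≤ n - 1 := by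
      have := laminar_big_card 𝒯b.ncard 𝒯b Set.univ le_rfl
        (fun T hT => ⟨Set.subset_univ T, hT.2⟩)
        (fun T₁ h₁ T₂ h₂ => hlam T₁ h₁.1 T₂ h₂.1)
      rw [huniv] at this
      exact this
    have : 𝒯.ncard ≤ 𝒯s.ncard + 𝒯b.ncard := by
      rw [hTcover]; exact Set.ncard_union_le 𝒯s 𝒯b
    omega
  -- Part B : the pairs with non-empty second component
  have hBsub : ℬ ⊆ 𝒮 := fun p hp => hp.1
  have hB : ℬ.ncard ≤ n - 1 := by
    have := partB_card (Set.univ : Set X).ncard ℬ Set.univ le_rfl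
      (by
        intro p hp
        exact ⟨Set.nonempty_iff_ne_empty.mpr (hSPS p hp.1).1,
          Set.nonempty_iff_ne_empty.mpr hp.2, (hSPS p hp.1).2, Set.subset_univ _⟩)
      (by
        intro p hp q hq hsame hne
        rcases hNC4 p hp.1 q hq.1 hne with ⟨h1, _⟩ | ⟨_, h1, _⟩ | ⟨_, _, h1, _⟩ | ⟨_, _, _, h1⟩
        · obtain ⟨_, ha | hb | hc⟩ := h1
          · exfalso
            obtain ⟨y, hy⟩ := Set.nonempty_iff_ne_empty.mpr hp.2
            exact hnielt y q.1 q.2 (ha (Or.inr hy)) (hsame ▸ hy) (hSPS q hq.1).2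
          · exfalso
            obtain ⟨y, hy⟩ := Set.nonempty_iff_ne_empty.mpr (hSPS p hp.1).1
            exact hnielt y p.1 p.2 hy (hsame.symm ▸ hb (Or.inl hy)) (hSPS p hp.1).2
          · exact Or.inl hc.1.subset
        · obtain ⟨_, ha | hb | hc⟩ := h1
          · exfalso
            obtain ⟨y, hy⟩ := Set.nonempty_iff_ne_empty.mpr hq.2
            exact hnielt y p.1 p.2 (ha (Or.inr hy)) (hsame.symm ▸ hy) (hSPS p hp.1).2
          · exfalso
            obtain ⟨y, hy⟩ := Set.nonempty_iff_ne_empty.mpr (hSPS q hq.1).1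
            exact hnielt y q.1 q.2 hy (hsame ▸ hb (Or.inl hy)) (hSPS q hq.1).2
          · exact Or.inr (Or.inl hc.1.subset)
        · exfalso
          obtain ⟨y, hy⟩ := Set.nonempty_iff_ne_empty.mpr hp.2
          exact hnielt y (p.1 ∪ p.2) (q.1 ∪ q.2) (Or.inr hy)
            (Or.inr (hsame ▸ hy)) h1
        · exact Or.inr (Or.inr h1.1))
      (by
        intro p hp q hq r hr h12 h23 hd hviol
        exact hNC5 ⟨p, hp.1, q, hq.1, r, hr.1, h12, h23, hp.2, hd, hviol⟩)
      (by
        intro p hp q hq hne2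
        have hne : p ≠ q := fun h => hne2 (h ▸ rfl)
        rcases hNC4 p hp.1 q hq.1 hne with ⟨h1, _⟩ | ⟨_, h1, _⟩ | ⟨_, _, h1, _⟩ | ⟨_, _, _, h1⟩
        · obtain ⟨_, ha | hb | hc⟩ := h1
          · exact Or.inr (Or.inl ha)
          · exact Or.inr (Or.inr (Or.inl hb))
          · exact absurd hc.2.1 hne2
        · obtain ⟨_, ha | hb | hc⟩ := h1
          · exact Or.inr (Or.inr (Or.inr (Or.inl ha)))
          · exact Or.inr (Or.inr (Or.inr (Or.inr hb)))
          · exact absurd hc.2.1 (fun hh => hne2 hh.symm)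
        · exact Or.inl h1
        · exact absurd h1.2.1 hne2)
    rw [huniv] at this
    exact this
  have hdisj : Disjoint 𝒮₀ ℬ := by
    rw [Set.disjoint_left]
    rintro p ⟨_, hp2⟩ ⟨_, hp2'⟩
    exact hp2' hp2
  have hsum : 𝒮.ncard = 𝒮₀.ncard + ℬ.ncard := by
    rw [hcover]
    exact Set.ncard_union_eq hdisj (Set.toFinite _) (Set.toFinite _)
  omega
end

section
/- For every integer n ≥ 2 there exists a set X with |X| = n and a 1-nested compatible set pair system 𝒮 on X with |𝒮| = 3n − 2; that is, the upper bound |𝒮| ≤ 3n − 2 for 1-nested compatible set pair systems is tight. -/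
open Set

variable {X : Type*}

section Aux

variable {n : ℕ} [NeZero n]

abbrev pA (x : Fin n) : Set (Fin n) × Set (Fin n) := ({x}, ∅)
abbrev pB (k : Fin n) : Set (Fin n) × Set (Fin n) := (Set.Iic k, ∅)
abbrev pC (k : Fin n) : Set (Fin n) × Set (Fin n) := ({k}, Set.Iio k)

lemma fin_zero_lt {k : Fin n} (hk : k ≠ 0) : (0 : Fin n) < k :=
  (Fin.zero_le k).lt_of_ne (Ne.symm hk)

lemma Iio_ne_empty {k : Fin n} (hk : k ≠ 0) : Set.Iio k ≠ (∅ : Set (Fin n)) :=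
  (Set.nonempty_iff_ne_empty).1 ⟨0, Set.mem_Iio.2 (fin_zero_lt hk)⟩

lemma Iic_not_sub_singleton {k : Fin n} (hk : k ≠ 0) (x : Fin n) :
    ¬ Set.Iic k ⊆ ({x} : Set (Fin n)) := by
  intro h
  have h0 : (0 : Fin n) ∈ Set.Iic k := Set.mem_Iic.2 (Fin.zero_le k)
  have hkk : k ∈ Set.Iic k := Set.mem_Iic.2 le_rfl
  have e0 : (0 : Fin n) = x := h h0
  have ek : k = x := h hkk
  exact hk (ek.trans e0.symm)

lemma Iic_ne_singleton {k : Fin n} (hk : k ≠ 0) (x : Fin n) :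
    Set.Iic k ≠ ({x} : Set (Fin n)) :=
  fun h => Iic_not_sub_singleton hk x h.subset

lemma Iic_not_sub_empty (k : Fin n) : ¬ Set.Iic k ⊆ (∅ : Set (Fin n)) :=
  fun h => Set.notMem_empty k (h (Set.mem_Iic.2 le_rfl))

lemma singleton_union_Iio (k : Fin n) : ({k} : Set (Fin n)) ∪ Set.Iio k = Set.Iic k := by
  ext i
  simp only [Set.mem_union, Set.mem_singleton_iff, Set.mem_Iio, Set.mem_Iic, Fin.lt_def,
    Fin.le_def, Fin.ext_iff]
  omega

lemma singleton_inter_Iio (k : Fin n) : ({k} : Set (Fin n)) ∩ Set.Iio k = ∅ := by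
  ext i
  simp only [Set.mem_inter_iff, Set.mem_singleton_iff, Set.mem_Iio, Set.mem_empty_iff_false,
    iff_false, not_and]
  rintro rfl
  exact lt_irrefl i

lemma singl_disj {x y : Fin n} (hxy : x ≠ y) : ({x} : Set (Fin n)) ∩ {y} = ∅ := by
  ext i
  simp only [Set.mem_inter_iff, Set.mem_singleton_iff, Set.mem_empty_iff_false, iff_false,
    not_and]
  rintro rfl h
  exact hxy h

lemma Iio_eq_Iic_pred {k : Fin n} (hk : k ≠ 0) :
    Set.Iio k = Set.Iic (⟨k.val - 1, by omega⟩ : Fin n) := by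
  have hk' : 0 < k.val := by
    rcases Nat.eq_zero_or_pos k.val with h | h
    · exact absurd (Fin.ext h) hk
    · exact h
  ext i
  simp only [Set.mem_Iio, Set.mem_Iic, Fin.lt_def, Fin.le_def]
  omega

lemma Iic_zero_eq : Set.Iic (0 : Fin n) = ({0} : Set (Fin n)) := by
  ext i
  simp only [Set.mem_Iic, Set.mem_singleton_iff]
  exact ⟨fun h => le_antisymm h (Fin.zero_le i), fun h => h.le⟩

end Aux

set_option linter.unusedSectionVars false

section Cases

variable {n : ℕ} [NeZero n]

/-- Shorthand for the NC4 conclusion. -/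
abbrev NC4Stmt (p q : Set (Fin n) × Set (Fin n)) : Prop :=
  ExactlyOne4 (splt p q) (splt q p)
    ((p.1 ∪ p.2) ∩ (q.1 ∪ q.2) = ∅)
    (p.1 ∩ q.1 = ∅ ∧ p.2 = q.2 ∧ p.2 ≠ ∅)

lemma inter_comm_empty {α : Type*} (S T : Set α) : S ∩ T = ∅ ↔ T ∩ S = ∅ := by
  rw [Set.inter_comm]

lemma fourth_swap (p q : Set X × Set X) :
    (p.1 ∩ q.1 = ∅ ∧ p.2 = q.2 ∧ p.2 ≠ ∅) ↔ (q.1 ∩ p.1 = ∅ ∧ q.2 = p.2 ∧ q.2 ≠ ∅) := by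
  constructor <;> rintro ⟨h1, h2, h3⟩ <;>
    exact ⟨by rw [Set.inter_comm]; exact h1, h2.symm, h2 ▸ h3⟩

lemma eo4_swap {a b c c' d d' : Prop} (hc : c ↔ c') (hd : d ↔ d')
    (h : ExactlyOne4 a b c d) : ExactlyOne4 b a c' d' := by
  unfold ExactlyOne4 at *; tauto

lemma nc4stmt_swap {p q : Set (Fin n) × Set (Fin n)} (h : NC4Stmt p q) : NC4Stmt q p :=
  eo4_swap (inter_comm_empty _ _) (fourth_swap p q) h

-- negation lemmas
lemma nsplt_AA {x y : Fin n} (hxy : x ≠ y) : ¬ splt (pA x) (pA y) := by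
  rintro ⟨hne, h | h | h⟩
  · rw [Set.union_empty, Set.singleton_subset_iff, Set.mem_singleton_iff] at h
    exact hxy h
  · rw [Set.union_empty, Set.subset_empty_iff] at h
    exact Set.singleton_ne_empty x h
  · exact h.2.2 rfl

lemma nsplt_BA {k x : Fin n} (hk : k ≠ 0) : ¬ splt (pB k) (pA x) := by
  rintro ⟨hne, h | h | h⟩
  · rw [Set.union_empty] at h; exact Iic_not_sub_singleton hk x h
  · rw [Set.union_empty] at h; exact Iic_not_sub_empty k h
  · exact h.2.2 rfl

lemma nsplt_AB {x k : Fin n} (hxk : ¬ x ≤ k) : ¬ splt (pA x) (pB k) := by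
  rintro ⟨hne, h | h | h⟩
  · rw [Set.union_empty, Set.singleton_subset_iff, Set.mem_Iic] at h; exact hxk h
  · rw [Set.union_empty, Set.subset_empty_iff] at h; exact Set.singleton_ne_empty x h
  · exact h.2.2 rfl

lemma nsplt_BB {l k : Fin n} (hlk : ¬ l ≤ k) : ¬ splt (pB l) (pB k) := by
  rintro ⟨hne, h | h | h⟩
  · rw [Set.union_empty, Set.Iic_subset_Iic] at h; exact hlk h
  · rw [Set.union_empty, Set.subset_empty_iff] at h
    exact Iic_not_sub_empty l (h ▸ Set.Subset.rfl)
  · exact h.2.2 rfl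

lemma nsplt_CA {k x : Fin n} (hk : k ≠ 0) : ¬ splt (pC k) (pA x) := by
  rintro ⟨hne, h | h | h⟩
  · rw [singleton_union_Iio] at h; exact Iic_not_sub_singleton hk x h
  · rw [singleton_union_Iio] at h; exact Iic_not_sub_empty k h
  · exact h.2.2 rfl

lemma nsplt_AC {x k : Fin n} (hxk : ¬ x ≤ k) : ¬ splt (pA x) (pC k) := by
  rintro ⟨hne, h | h | h⟩
  · rw [Set.union_empty, Set.singleton_subset_iff, Set.mem_singleton_iff] at h
    exact hxk h.le
  · rw [Set.union_empty, Set.singleton_subset_iff, Set.mem_Iio] at h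
    exact hxk h.le
  · exact h.2.2 h.2.1.symm

lemma nsplt_CB {l k : Fin n} (hlk : ¬ l ≤ k) : ¬ splt (pC l) (pB k) := by
  rintro ⟨hne, h | h | h⟩
  · rw [singleton_union_Iio, Set.Iic_subset_Iic] at h; exact hlk h
  · rw [singleton_union_Iio, Set.subset_empty_iff] at h
    exact Iic_not_sub_empty l (h ▸ Set.Subset.rfl)
  · exact h.2.2 rfl

lemma nsplt_BC {k l : Fin n} (hk : k ≠ 0) (hkl : ¬ k < l) : ¬ splt (pB k) (pC l) := by
  rintro ⟨hne, h | h | h⟩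
  · rw [Set.union_empty] at h; exact Iic_not_sub_singleton hk l h
  · rw [Set.union_empty, Set.Iic_subset_Iio] at h; exact hkl h
  · exact h.2.2 h.2.1.symm

lemma nsplt_CC {l k : Fin n} (hl : l ≠ 0) (hlk : ¬ l < k) : ¬ splt (pC l) (pC k) := by
  rintro ⟨hne, h | h | h⟩
  · rw [singleton_union_Iio] at h; exact Iic_not_sub_singleton hl k h
  · rw [singleton_union_Iio, Set.Iic_subset_Iio] at h; exact hlk h
  · have : l = k := Set.Iio_injective h.2.1
    subst this
    exact (ssubset_irrefl _) h.1

-- positive splt lemmas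
lemma splt_AB {x k : Fin n} (hk : k ≠ 0) (hxk : x ≤ k) : splt (pA x) (pB k) := by
  refine ⟨?_, Or.inl ?_⟩
  · intro h
    exact Iic_ne_singleton hk x (congrArg Prod.fst h).symm
  · rw [Set.union_empty, Set.singleton_subset_iff]; exact Set.mem_Iic.2 hxk

lemma splt_BB {k l : Fin n} (hkl : k < l) : splt (pB k) (pB l) := by
  refine ⟨?_, Or.inl ?_⟩
  · intro h
    have := Set.Iic_injective (congrArg Prod.fst h)
    exact absurd this hkl.ne
  · rw [Set.union_empty]; exact Set.Iic_subset_Iic.2 hkl.le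

lemma splt_AC {x k : Fin n} (hk : k ≠ 0) (hxk : x ≤ k) : splt (pA x) (pC k) := by
  refine ⟨?_, ?_⟩
  · intro h
    exact Iio_ne_empty hk (congrArg Prod.snd h).symm
  · rcases lt_or_eq_of_le hxk with h | h
    · exact Or.inr (Or.inl (by rw [Set.union_empty, Set.singleton_subset_iff]; exact h))
    · exact Or.inl (by rw [Set.union_empty, Set.singleton_subset_iff]; exact h ▸ rfl)

lemma splt_CB {l k : Fin n} (hl : l ≠ 0) (hlk : l ≤ k) : splt (pC l) (pB k) := by
  refine ⟨?_, Or.inl ?_⟩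
  · intro h
    exact Iio_ne_empty hl (congrArg Prod.snd h)
  · rw [singleton_union_Iio]; exact Set.Iic_subset_Iic.2 hlk

lemma splt_BC {k l : Fin n} (hl : l ≠ 0) (hkl : k < l) : splt (pB k) (pC l) := by
  refine ⟨?_, Or.inr (Or.inl ?_)⟩
  · intro h
    exact Iio_ne_empty hl (congrArg Prod.snd h).symm
  · rw [Set.union_empty]; exact Set.Iic_subset_Iio.2 hkl

lemma splt_CC {k l : Fin n} (hkl : k < l) : splt (pC k) (pC l) := by
  refine ⟨?_, Or.inr (Or.inl ?_)⟩
  · intro h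
    have : k = l := Set.singleton_injective (congrArg Prod.fst h)
    exact absurd this hkl.ne
  · rw [singleton_union_Iio]; exact Set.Iic_subset_Iio.2 hkl

end Cases

section BigCases

variable {n : ℕ} [NeZero n]

lemma caseAA {x y : Fin n} (hxy : x ≠ y) : NC4Stmt (pA x) (pA y) := by
  refine Or.inr (Or.inr (Or.inl ⟨nsplt_AA hxy, nsplt_AA hxy.symm, ?_, ?_⟩))
  · show (({x} : Set (Fin n)) ∪ ∅) ∩ (({y} : Set (Fin n)) ∪ ∅) = ∅
    rw [Set.union_empty, Set.union_empty]; exact singl_disj hxy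
  · rintro ⟨-, -, h⟩; exact h rfl

lemma caseAB {x k : Fin n} (hk : k ≠ 0) : NC4Stmt (pA x) (pB k) := by
  by_cases hxk : x ≤ k
  · refine Or.inl ⟨splt_AB hk hxk, nsplt_BA hk, ?_, ?_⟩
    · intro hemp
      have hx : x ∈ (({x} : Set (Fin n)) ∪ ∅) ∩ (Set.Iic k ∪ ∅) :=
        ⟨Set.mem_union_left _ rfl, Set.mem_union_left _ (Set.mem_Iic.2 hxk)⟩
      rw [hemp] at hx
      exact hx
    · rintro ⟨-, -, h⟩; exact h rfl
  · refine Or.inr (Or.inr (Or.inl ⟨nsplt_AB hxk, nsplt_BA hk, ?_, ?_⟩))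
    · show (({x} : Set (Fin n)) ∪ ∅) ∩ (Set.Iic k ∪ ∅) = ∅
      rw [Set.union_empty, Set.union_empty]
      ext i
      simp only [Set.mem_inter_iff, Set.mem_singleton_iff, Set.mem_Iic,
        Set.mem_empty_iff_false, iff_false, not_and]
      rintro rfl h
      exact hxk h
    · rintro ⟨-, -, h⟩; exact h rfl

lemma caseAC {x k : Fin n} (hk : k ≠ 0) : NC4Stmt (pA x) (pC k) := by
  by_cases hxk : x ≤ k
  · refine Or.inl ⟨splt_AC hk hxk, nsplt_CA hk, ?_, ?_⟩
    · intro hemp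
      have hx : x ∈ (({x} : Set (Fin n)) ∪ ∅) ∩ (({k} : Set (Fin n)) ∪ Set.Iio k) := by
        rw [Set.union_empty, singleton_union_Iio]
        exact ⟨rfl, Set.mem_Iic.2 hxk⟩
      rw [hemp] at hx
      exact hx
    · rintro ⟨-, -, h⟩; exact h rfl
  · refine Or.inr (Or.inr (Or.inl ⟨nsplt_AC hxk, nsplt_CA hk, ?_, ?_⟩))
    · show (({x} : Set (Fin n)) ∪ ∅) ∩ (({k} : Set (Fin n)) ∪ Set.Iio k) = ∅
      rw [Set.union_empty, singleton_union_Iio]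
      ext i
      simp only [Set.mem_inter_iff, Set.mem_singleton_iff, Set.mem_Iic,
        Set.mem_empty_iff_false, iff_false, not_and]
      rintro rfl h
      exact hxk h
    · rintro ⟨-, -, h⟩; exact h rfl

lemma caseBB {k l : Fin n} (hkl : k < l) : NC4Stmt (pB k) (pB l) := by
  refine Or.inl ⟨splt_BB hkl, nsplt_BB (not_le.2 hkl), ?_, ?_⟩
  · intro hemp
    have hx : (0 : Fin n) ∈ (Set.Iic k ∪ (∅ : Set (Fin n))) ∩ (Set.Iic l ∪ ∅) :=
      ⟨Set.mem_union_left _ (Set.mem_Iic.2 (Fin.zero_le k)),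
       Set.mem_union_left _ (Set.mem_Iic.2 (Fin.zero_le l))⟩
    rw [hemp] at hx
    exact hx
  · rintro ⟨-, -, h⟩; exact h rfl

lemma caseBC {k l : Fin n} (hk : k ≠ 0) (hl : l ≠ 0) : NC4Stmt (pB k) (pC l) := by
  by_cases hlk : l ≤ k
  · refine Or.inr (Or.inl ⟨nsplt_BC hk (not_lt.2 hlk), splt_CB hl hlk, ?_, ?_⟩)
    · intro hemp
      have hx : l ∈ (Set.Iic k ∪ (∅ : Set (Fin n))) ∩ (({l} : Set (Fin n)) ∪ Set.Iio l) :=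
        ⟨Set.mem_union_left _ (Set.mem_Iic.2 hlk), Set.mem_union_left _ rfl⟩
      rw [hemp] at hx
      exact hx
    · rintro ⟨-, h, -⟩; exact Iio_ne_empty hl h.symm
  · have hkl : k < l := not_le.1 hlk
    refine Or.inl ⟨splt_BC hl hkl, nsplt_CB (not_le.2 hkl), ?_, ?_⟩
    · intro hemp
      have hx : (0 : Fin n) ∈ (Set.Iic k ∪ (∅ : Set (Fin n))) ∩ (({l} : Set (Fin n)) ∪ Set.Iio l) :=
        ⟨Set.mem_union_left _ (Set.mem_Iic.2 (Fin.zero_le k)),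
         Set.mem_union_right _ (Set.mem_Iio.2 (fin_zero_lt hl))⟩
      rw [hemp] at hx
      exact hx
    · rintro ⟨-, h, -⟩; exact Iio_ne_empty hl h.symm

lemma caseCC {k l : Fin n} (hl : l ≠ 0) (hkl : k < l) : NC4Stmt (pC k) (pC l) := by
  refine Or.inl ⟨splt_CC hkl, nsplt_CC hl (lt_asymm hkl), ?_, ?_⟩
  · intro hemp
    have hx : k ∈ (({k} : Set (Fin n)) ∪ Set.Iio k) ∩ (({l} : Set (Fin n)) ∪ Set.Iio l) :=
      ⟨Set.mem_union_left _ rfl, Set.mem_union_right _ (Set.mem_Iio.2 hkl)⟩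
    rw [hemp] at hx
    exact hx
  · rintro ⟨-, h, -⟩; exact absurd (Set.Iio_injective h) hkl.ne

end BigCases


/-- For every `n ≥ 2` there is a set `X` with `|X| = n` and a 1-nested compatible
set pair system `𝒮` on `X` with `|𝒮| = 3n − 2`; the bound `|𝒮| ≤ 3n − 2` is tight. -/
theorem card_bound_tight (n : ℕ) (hn : 2 ≤ n) :
    ∃ (X : Type) (_ : Fintype X), Fintype.card X = n ∧
      ∃ 𝒮 : Set (Set X × Set X), OneNestedCompatible 𝒮 ∧ 𝒮.ncard = 3 * n - 2 := by
  haveI : NeZero n := ⟨by omega⟩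
  classical
  refine ⟨Fin n, inferInstance, Fintype.card_fin n, ?_⟩
  refine ⟨{p | (∃ x, p = pA x) ∨ (∃ k, k ≠ 0 ∧ p = pB k) ∨ (∃ k, k ≠ 0 ∧ p = pC k)},
    ⟨?_, ?_, ?_, ?_, ?_, ?_⟩, ?_⟩
  -- IsSPS
  · rintro p (⟨x, rfl⟩ | ⟨k, hk, rfl⟩ | ⟨k, hk, rfl⟩)
    · exact ⟨Set.singleton_ne_empty x, Set.inter_empty _⟩
    · exact ⟨fun h => Iic_not_sub_empty k (h ▸ Set.Subset.rfl), Set.inter_empty _⟩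
    · exact ⟨Set.singleton_ne_empty k, singleton_inter_Iio k⟩
  -- NC1
  · have hlt : n - 1 < n := by omega
    refine Or.inr (Or.inl ⟨⟨n - 1, hlt⟩, ?_, ?_⟩)
    · intro h
      have := congrArg Fin.val h
      simp only [Fin.val_zero] at this
      omega
    · have huniv : Set.Iic (⟨n - 1, hlt⟩ : Fin n) = Set.univ := by
        ext i
        simp only [Set.mem_Iic, Set.mem_univ, iff_true, Fin.le_def]
        have := i.isLt
        omega
      show ((Set.univ : Set (Fin n)), (∅ : Set (Fin n))) = pB _
      rw [pB, huniv]
  -- NC2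
  · intro x
    exact Or.inl ⟨x, rfl⟩
  -- NC3
  · rintro p (⟨x, rfl⟩ | ⟨k, hk, rfl⟩ | ⟨k, hk, rfl⟩) hne
    · exact absurd rfl hne
    · exact absurd rfl hne
    · have hlt2 : k.val - 1 < n := by omega
      have hj : Set.Iio k = Set.Iic (⟨k.val - 1, hlt2⟩ : Fin n) := Iio_eq_Iic_pred hk
      by_cases hj0 : (⟨k.val - 1, hlt2⟩ : Fin n) = 0
      · refine Or.inl ⟨0, ?_⟩
        show ((Set.Iio k : Set (Fin n)), (∅ : Set (Fin n))) = pA 0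
        rw [hj, hj0, Iic_zero_eq]
      · refine Or.inr (Or.inl ⟨⟨k.val - 1, hlt2⟩, hj0, ?_⟩)
        show ((Set.Iio k : Set (Fin n)), (∅ : Set (Fin n))) = pB _
        rw [pB, hj]
  -- NC4
  · rintro p (⟨x, rfl⟩ | ⟨k, hk, rfl⟩ | ⟨k, hk, rfl⟩)
      q (⟨y, rfl⟩ | ⟨l, hl, rfl⟩ | ⟨l, hl, rfl⟩) hne
    · exact caseAA (fun h => hne (by rw [h]))
    · exact caseAB hl
    · exact caseAC hl
    · exact nc4stmt_swap (caseAB hk)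
    · have hkl : k ≠ l := fun h => hne (by rw [h])
      rcases hkl.lt_or_gt with h | h
      · exact caseBB h
      · exact nc4stmt_swap (caseBB h)
    · exact caseBC hk hl
    · exact nc4stmt_swap (caseAC hk)
    · exact nc4stmt_swap (caseBC hl hk)
    · have hkl : k ≠ l := fun h => hne (by rw [h])
      rcases hkl.lt_or_gt with h | h
      · exact caseCC hl h
      · exact nc4stmt_swap (caseCC hk h)
  -- NC5
  · rintro ⟨p, hp, q, hq, r, hr, hpq2, hqr2, hp2, hint, -⟩
    rcases hp with ⟨x, rfl⟩ | ⟨k, hk, rfl⟩ | ⟨a, ha, rfl⟩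
    · exact hp2 rfl
    · exact hp2 rfl
    rcases hq with ⟨y, rfl⟩ | ⟨l, hl, rfl⟩ | ⟨b, hb, rfl⟩
    · exact Iio_ne_empty ha hpq2
    · exact Iio_ne_empty ha hpq2
    have hab : a = b := Set.Iio_injective hpq2
    subst hab
    have : a ∈ ({a} : Set (Fin n)) ∩ {a} := ⟨rfl, rfl⟩
    rw [hint] at this
    exact this
  -- cardinality
  have hinj1 : Function.Injective (fun x : Fin n => pA x) := by
    intro a b h
    exact Set.singleton_injective (congrArg Prod.fst h)
  have hinj2 : Function.Injective (fun k : Fin n => pB k) := by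
    intro a b h
    exact Set.Iic_injective (congrArg Prod.fst h)
  have hinj3 : Function.Injective (fun k : Fin n => pC k) := by
    intro a b h
    exact Set.singleton_injective (congrArg Prod.fst h)
  set F1 : Finset (Set (Fin n) × Set (Fin n)) :=
    Finset.univ.image (fun x : Fin n => pA x) with hF1
  set F2 : Finset (Set (Fin n) × Set (Fin n)) :=
    (Finset.univ.filter (fun k : Fin n => k ≠ 0)).image (fun k : Fin n => pB k) with hF2
  set F3 : Finset (Set (Fin n) × Set (Fin n)) :=
    (Finset.univ.filter (fun k : Fin n => k ≠ 0)).image (fun k : Fin n => pC k) with hF3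
  have hset : {p : Set (Fin n) × Set (Fin n) |
      (∃ x, p = pA x) ∨ (∃ k, k ≠ 0 ∧ p = pB k) ∨ (∃ k, k ≠ 0 ∧ p = pC k)}
      = ↑(F1 ∪ F2 ∪ F3) := by
    ext p
    simp only [Set.mem_setOf_eq, Finset.coe_union, Set.mem_union, Finset.mem_coe,
      hF1, hF2, hF3, Finset.mem_image, Finset.mem_univ, true_and, Finset.mem_filter]
    constructor
    · rintro (⟨x, rfl⟩ | ⟨k, hk, rfl⟩ | ⟨k, hk, rfl⟩)
      · exact Or.inl (Or.inl ⟨x, rfl⟩)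
      · exact Or.inl (Or.inr ⟨k, hk, rfl⟩)
      · exact Or.inr ⟨k, hk, rfl⟩
    · rintro ((⟨x, rfl⟩ | ⟨k, hk, rfl⟩) | ⟨k, hk, rfl⟩)
      · exact Or.inl ⟨x, rfl⟩
      · exact Or.inr (Or.inl ⟨k, hk, rfl⟩)
      · exact Or.inr (Or.inr ⟨k, hk, rfl⟩)
  rw [hset, Set.ncard_coe_finset]
  have hfilter : (Finset.univ.filter (fun k : Fin n => k ≠ 0)).card = n - 1 := by
    rw [Finset.filter_ne', Finset.card_erase_of_mem (Finset.mem_univ 0), Finset.card_univ,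
      Fintype.card_fin]
  have hc1 : F1.card = n := by
    rw [hF1, Finset.card_image_of_injective _ hinj1, Finset.card_univ, Fintype.card_fin]
  have hc2 : F2.card = n - 1 := by
    rw [hF2, Finset.card_image_of_injective _ hinj2, hfilter]
  have hc3 : F3.card = n - 1 := by
    rw [hF3, Finset.card_image_of_injective _ hinj3, hfilter]
  have hd12 : Disjoint F1 F2 := by
    rw [Finset.disjoint_left]
    rintro p hp1 hp2
    simp only [hF1, hF2, Finset.mem_image, Finset.mem_univ, true_and,
      Finset.mem_filter] at hp1 hp2
    obtain ⟨x, hx⟩ := hp1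
    obtain ⟨k, hk, hkk⟩ := hp2
    have : Set.Iic k = ({x} : Set (Fin n)) := by
      have := hkk.trans hx.symm
      exact congrArg Prod.fst this
    exact Iic_ne_singleton hk x this
  have hd3 : Disjoint (F1 ∪ F2) F3 := by
    rw [Finset.disjoint_left]
    rintro p hp1 hp3
    simp only [hF1, hF2, hF3, Finset.mem_union, Finset.mem_image, Finset.mem_univ, true_and,
      Finset.mem_filter] at hp1 hp3
    obtain ⟨k, hk, hkk⟩ := hp3
    have hsnd : p.2 = Set.Iio k := by rw [← hkk]
    rcases hp1 with ⟨x, hx⟩ | ⟨l, hl, hll⟩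
    · have : p.2 = (∅ : Set (Fin n)) := by rw [← hx]
      exact Iio_ne_empty hk (hsnd.symm.trans this)
    · have : p.2 = (∅ : Set (Fin n)) := by rw [← hll]
      exact Iio_ne_empty hk (hsnd.symm.trans this)
  rw [Finset.card_union_of_disjoint hd3, Finset.card_union_of_disjoint hd12, hc1, hc2, hc3]
  omega
end
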